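/- arXiv:0712.0405 — 8 statements merged into one kernel-verified Lean document; each statement's English description precedes it below -/
import Mathlib

section
/- In the Sweedler algebra T_{-1}, the set of elements t satisfying t² = 1 is exactly {1, -1} ∪ {±g + h : h ∈ Rad T_{-1}}. -/
/-- In the Sweedler algebra `T₋₁`, the set of elements `t` with `t² = 1` is
exactly `{1, -1} ∪ {±g + h : h ∈ Rad T₋₁}`, where `Rad T₋₁ = k·x ⊕ k·gx`. -/
theorem sweedler_square_roots_of_one
    (k : Type*) [Field k] [IsAlgClosed k] [CharZero k]
    (A : Type*) [Ring A] [Algebra k A]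
    (g x : A) (hg : g ^ 2 = 1) (hx : x ^ 2 = 0) (hxg : x * g = -(g * x))
    (b : Module.Basis (Fin 4) k A)
    (hb0 : b 0 = 1) (hb1 : b 1 = g) (hb2 : b 2 = x) (hb3 : b 3 = g * x) :
    ∀ t : A, t ^ 2 = 1 ↔
      (t = 1 ∨ t = -1 ∨
        ∃ h ∈ Submodule.span k ({x, g * x} : Set A), t = g + h ∨ t = -g + h) := by
  have hgg : g * g = 1 := by rw [← pow_two]; exact hg
  have hxx : x * x = 0 := by rw [← pow_two]; exact hx
  have hggx : g * (g * x) = x := by rw [← mul_assoc, hgg, one_mul]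
  have hxgx : x * (g * x) = 0 := by
    rw [← mul_assoc, hxg, neg_mul, mul_assoc, hxx, mul_zero, neg_zero]
  have hgxg : (g * x) * g = -x := by
    rw [mul_assoc, hxg, mul_neg, hggx]
  have hgxx : (g * x) * x = 0 := by rw [mul_assoc, hxx, mul_zero]
  have hgxgx : (g * x) * (g * x) = 0 := by rw [mul_assoc, hxgx, mul_zero]
  have key : ∀ p q r s : k,
      (p • (1:A) + q • g + r • x + s • (g*x)) ^ 2
        = (p^2 + q^2) • (1:A) + (2*p*q) • g + (2*p*r) • x + (2*p*s) • (g*x) := by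
    intro p q r s
    rw [pow_two]
    simp only [mul_add, add_mul, smul_mul_smul_comm, one_mul, mul_one,
      hgg, hxx, hggx, hxg, hxgx, hgxg, hgxx, hgxgx]
    module
  intro t
  constructor
  · intro ht2
    set p := b.repr t 0 with hp
    set q := b.repr t 1 with hq
    set r := b.repr t 2 with hr
    set s := b.repr t 3 with hs
    have ht : t = p • (1:A) + q • g + r • x + s • (g*x) := by
      conv_lhs => rw [← b.sum_repr t]
      rw [Fin.sum_univ_four, hb0, hb1, hb2, hb3]
    have main : (p^2+q^2) • (1:A) + (2*p*q) • g + (2*p*r) • x + (2*p*s) • (g*x)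
        = (1:k) • (1:A) + (0:k) • g + (0:k) • x + (0:k) • (g*x) := by
      rw [← key, ← ht, ht2]
      module
    have hf : (∑ i, (![p^2+q^2, 2*p*q, 2*p*r, 2*p*s] : Fin 4 → k) i • b i)
        = ∑ i, (![1,0,0,0] : Fin 4 → k) i • b i := by
      rw [Fin.sum_univ_four, Fin.sum_univ_four]
      simpa [hb0, hb1, hb2, hb3] using main
    have h1 : (![p^2+q^2, 2*p*q, 2*p*r, 2*p*s] : Fin 4 → k) = ![1,0,0,0] :=
      calc (![p^2+q^2, 2*p*q, 2*p*r, 2*p*s] : Fin 4 → k)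
          = b.repr (∑ i, (![p^2+q^2, 2*p*q, 2*p*r, 2*p*s] : Fin 4 → k) i • b i) :=
            (b.repr_sum_self _).symm
        _ = b.repr (∑ i, (![1,0,0,0] : Fin 4 → k) i • b i) := by rw [hf]
        _ = ![1,0,0,0] := b.repr_sum_self _
    have h2 : (2:k) ≠ 0 := two_ne_zero
    have e0 : p^2 + q^2 = 1 := by
      have := congrFun h1 0
      simpa [Matrix.cons_val_zero] using this
    have e1 : p * q = 0 := by
      have := congrFun h1 1
      simp only [Matrix.cons_val_one, Matrix.head_cons, Matrix.cons_val_zero] at this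
      rcases mul_eq_zero.mp (by linear_combination this : (2:k) * (p*q) = 0) with h | h
      · exact absurd h h2
      · exact h
    have e2 : p * r = 0 := by
      have := congrFun h1 2
      simp only [Matrix.cons_val_two, Matrix.tail_cons, Matrix.head_cons] at this
      rcases mul_eq_zero.mp (by linear_combination this : (2:k) * (p*r) = 0) with h | h
      · exact absurd h h2
      · exact h
    have e3 : p * s = 0 := by
      have := congrFun h1 3
      simp only [Matrix.cons_val_three, Matrix.tail_cons, Matrix.head_cons] at this
      rcases mul_eq_zero.mp (by linear_combination this : (2:k) * (p*s) = 0) with h | h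
      · exact absurd h h2
      · exact h
    by_cases hp0 : p = 0
    · -- t = ±g + h
      have hq2 : q^2 = 1 := by rw [hp0] at e0; simpa using e0
      have hqcases : q = 1 ∨ q = -1 := by
        rcases mul_eq_zero.mp (by linear_combination hq2 : (q-1)*(q+1) = 0) with h | h
        · left; linear_combination h
        · right; linear_combination h
      refine Or.inr (Or.inr ⟨r • x + s • (g*x), ?_, ?_⟩)
      · exact Submodule.add_mem _
          (Submodule.smul_mem _ _ (Submodule.subset_span (by simp)))
          (Submodule.smul_mem _ _ (Submodule.subset_span (by simp)))
      · rcases hqcases with h | h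
        · left; rw [ht, hp0, h]; module
        · right; rw [ht, hp0, h]; module
    · have hq0 : q = 0 := by
        rcases mul_eq_zero.mp e1 with h | h
        · exact absurd h hp0
        · exact h
      have hr0 : r = 0 := by
        rcases mul_eq_zero.mp e2 with h | h
        · exact absurd h hp0
        · exact h
      have hs0 : s = 0 := by
        rcases mul_eq_zero.mp e3 with h | h
        · exact absurd h hp0
        · exact h
      have hp2 : p^2 = 1 := by rw [hq0] at e0; simpa using e0
      have hpcases : p = 1 ∨ p = -1 := by
        rcases mul_eq_zero.mp (by linear_combination hp2 : (p-1)*(p+1) = 0) with h | h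
        · left; linear_combination h
        · right; linear_combination h
      rcases hpcases with h | h
      · left; rw [ht, h, hq0, hr0, hs0]; simp
      · right; rw [ht, h, hq0, hr0, hs0]; simp
  · rintro (rfl | rfl | ⟨h, hmem, rfl | rfl⟩)
    · exact one_pow 2
    · exact neg_one_sq
    · obtain ⟨c, d, hcd⟩ := Submodule.mem_span_pair.mp hmem
      have : g + h = (0:k) • (1:A) + (1:k) • g + c • x + d • (g*x) := by
        rw [← hcd]; module
      rw [this, key]; simp
    · obtain ⟨c, d, hcd⟩ := Submodule.mem_span_pair.mp hmem
      have : -g + h = (0:k) • (1:A) + (-1:k) • g + c • x + d • (g*x) := by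
        rw [← hcd]; module
      rw [this, key]; simp
end

section
/- Up to isomorphism, the unique simple 2-dimensional representation of A''₄ = k⟨g,x | g⁴=1, x²=g²-1, gx=-xg⟩ is given by ρ(g) = diag(i,-i) and ρ(x) = [[0,2],[-1,0]], where i is a primitive 4th root of unity. -/
section Helpers
variable {k : Type*} [Field k] {S : Type*} [Ring S] [Algebra k S]
variable {G X : S}

lemma xg_pow (hGX : G * X = -(X * G)) (n : ℕ) :
    X * G ^ n = ((-1:k)^n) • (G ^ n * X) := by
  have hXG : X * G = -(G * X) := by rw [hGX, neg_neg]
  induction n with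
  | zero => simp
  | succ n ih =>
    calc X * G^(n+1) = (X * G^n) * G := by rw [pow_succ, mul_assoc]
    _ = ((-1:k)^n) • (G^n * (X * G)) := by rw [ih, smul_mul_assoc, mul_assoc]
    _ = ((-1:k)^n) • (G^n * (-(G * X))) := by rw [hXG]
    _ = ((-1:k)^(n+1)) • (G^(n+1) * X) := by
        rw [pow_succ, pow_succ, mul_assoc]
        rw [mul_neg, smul_neg]
        rw [mul_comm ((-1:k)^n) (-1:k), neg_one_mul, neg_smul]

lemma xpow_gpow (hGX : G * X = -(X * G)) (m n : ℕ) :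
    X ^ m * G ^ n = ((-1:k)^(m*n)) • (G ^ n * X ^ m) := by
  induction m with
  | zero => simp
  | succ m ih =>
    calc X^(m+1) * G^n = X^m * (X * G^n) := by rw [pow_succ, mul_assoc]
    _ = X^m * (((-1:k)^n) • (G^n * X)) := by rw [xg_pow (k := k) hGX]
    _ = ((-1:k)^n) • ((X^m * G^n) * X) := by rw [mul_smul_comm, mul_assoc]
    _ = ((-1:k)^n) • (((-1:k)^(m*n)) • ((G^n * X^m) * X)) := by rw [ih, smul_mul_assoc]
    _ = ((-1:k)^((m+1)*n)) • (G^n * X^(m+1)) := by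
        rw [smul_smul, ← pow_add, mul_assoc, ← pow_succ]
        ring_nf

end Helpers

section Key
variable {k : Type*} [Field k] {S : Type*} [Ring S] [Algebra k S]

lemma keyF {G X : S} (hG4 : G^4 = 1) (hX2 : X^2 = G^2 - 1) (hGX : G*X = -(X*G))
    (p q : Fin 4 × Fin 2) :
    (G ^ ((p.1:ℕ)) * X ^ ((p.2:ℕ))) * (G ^ ((q.1:ℕ)) * X ^ ((q.2:ℕ))) =
      ((-1:k)^((p.2:ℕ) * (q.1:ℕ))) •
        (if (p.2:ℕ) + (q.2:ℕ) = 2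
          then G ^ (((p.1+q.1+2 : Fin 4):ℕ)) * X ^ (((0:Fin 2):ℕ))
               - G ^ (((p.1+q.1 : Fin 4):ℕ)) * X ^ (((0:Fin 2):ℕ))
          else G ^ (((p.1+q.1 : Fin 4):ℕ)) * X ^ (((p.2+q.2 : Fin 2):ℕ))) := by
  obtain ⟨a, s⟩ := p; obtain ⟨c, d⟩ := q
  have hmod : ∀ n : ℕ, G ^ n = G ^ (n % 4) := fun n => pow_eq_pow_mod n hG4
  have step : (G ^ (a:ℕ) * X ^ (s:ℕ)) * (G ^ (c:ℕ) * X ^ (d:ℕ))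
      = ((-1:k)^((s:ℕ) * (c:ℕ))) • (G ^ ((a:ℕ)+(c:ℕ)) * X ^ ((s:ℕ)+(d:ℕ))) := by
    calc (G ^ (a:ℕ) * X ^ (s:ℕ)) * (G ^ (c:ℕ) * X ^ (d:ℕ))
        = G ^ (a:ℕ) * ((X ^ (s:ℕ) * G ^ (c:ℕ)) * X ^ (d:ℕ)) := by
          rw [mul_assoc, mul_assoc]
      _ = ((-1:k)^((s:ℕ) * (c:ℕ))) • (G ^ (a:ℕ) * (G ^ (c:ℕ) * (X ^ (s:ℕ) * X ^ (d:ℕ)))) := by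
          rw [xpow_gpow (k := k) hGX, smul_mul_assoc, mul_smul_comm, mul_assoc]
      _ = ((-1:k)^((s:ℕ) * (c:ℕ))) • (G ^ ((a:ℕ)+(c:ℕ)) * X ^ ((s:ℕ)+(d:ℕ))) := by
          rw [← mul_assoc, ← pow_add, ← pow_add]
  rw [step]
  congr 1
  fin_cases s <;> fin_cases d <;> simp only [Fin.isValue, Fin.val_zero, Fin.val_one] <;>
    norm_num
  · -- s = 0, d = 0
    rw [hmod ((a:ℕ)+(c:ℕ)), hmod ((a+c : Fin 4):ℕ)]
    congr 1
    have := Fin.val_add a c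
    omega
  · -- s = 0, d = 1 : X^(0+1) vs X^((0+1 : Fin 2)) and G exponents
    rw [hmod ((a:ℕ)+(c:ℕ)), hmod ((a+c : Fin 4):ℕ)]
    congr 2
    · have := Fin.val_add a c
      omega
  · -- s = 1, d = 0
    rw [hmod ((a:ℕ)+(c:ℕ)), hmod ((a+c : Fin 4):ℕ)]
    congr 2
    · have := Fin.val_add a c
      omega
  · -- s = 1, d = 1
    rw [hX2, mul_sub, mul_one, ← pow_add]
    rw [hmod ((a:ℕ)+(c:ℕ)+2), hmod ((a:ℕ)+(c:ℕ)), hmod ((a+c+2 : Fin 4):ℕ),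
      hmod ((a+c : Fin 4):ℕ)]
    have h1 := Fin.val_add a c
    have h2 := Fin.val_add (a+c) 2
    have h3 : ((2 : Fin 4) : ℕ) = 2 := rfl
    congr 2 <;> omega

end Key

lemma mulVec_all_smul {k : Type*} [Field k] {M : Matrix (Fin 2) (Fin 2) k} {c : k}
    (h : ∀ w, M.mulVec w = c • w) : M = c • 1 := by
  ext r s
  have h1 := congrFun (h (Pi.single s 1)) r
  simp only [Matrix.mulVec_single, mul_one, MulOpposite.op_one, one_smul, Matrix.col_apply] at h1
  simp [h1, Matrix.smul_apply, Matrix.one_apply, Pi.single_apply, eq_comm]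

lemma mulVec_all_zero {k : Type*} [Field k] {M : Matrix (Fin 2) (Fin 2) k}
    (h : ∀ w, M.mulVec w = 0) : M = 0 := by
  have := mulVec_all_smul (c := (0:k)) (M := M) (fun w => by simp [h w])
  simpa using this

/-- A matrix representation `ρ : B → M₂(k)` is irreducible if the only subspaces of `k²`
invariant under all `ρ(b)` are `⊥` and `⊤`. -/
def MatrixRepIrreducible {k : Type*} [Field k] {B : Type*} [Ring B] [Algebra k B]
    (ρ : B →ₐ[k] Matrix (Fin 2) (Fin 2) k) : Prop :=
  ∀ W : Submodule k (Fin 2 → k), (∀ a : B, ∀ v ∈ W, (ρ a).mulVec v ∈ W) → W = ⊥ ∨ W = ⊤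

set_option maxHeartbeats 3200000 in
/-- Up to isomorphism, the unique simple 2-dimensional representation of
`A''₄ = k⟨g,x | g⁴=1, x²=g²-1, gx=-xg⟩` is given by `ρ(g) = diag(i,-i)` and
`ρ(x) = [[0,2],[-1,0]]`, where `i` is a primitive 4th root of unity. -/
theorem A4pp_unique_simple_two_dimensional_rep
    (k : Type*) [Field k] [IsAlgClosed k] [CharZero k]
    (i : k) (hi : IsPrimitiveRoot i 4)
    (B : Type*) [Ring B] [Algebra k B]
    (g x : B) (hg : g ^ 4 = 1) (hx : x ^ 2 = g ^ 2 - 1) (hgx : g * x = -(x * g))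
    (b : Module.Basis (Fin 4 × Fin 2) k B)
    (hb : ∀ p : Fin 4 × Fin 2, b p = g ^ (p.1 : ℕ) * x ^ (p.2 : ℕ)) :
    ∃ ρ₀ : B →ₐ[k] Matrix (Fin 2) (Fin 2) k,
      ρ₀ g = !![i, 0; 0, -i] ∧ ρ₀ x = !![0, 2; -1, 0] ∧ MatrixRepIrreducible ρ₀ ∧
      ∀ ρ : B →ₐ[k] Matrix (Fin 2) (Fin 2) k, MatrixRepIrreducible ρ →
        ∃ P : GL (Fin 2) k, ∀ a : B,
          ρ a = (P : Matrix (Fin 2) (Fin 2) k) * ρ₀ a * ((P⁻¹ : GL (Fin 2) k) : Matrix (Fin 2) (Fin 2) k) := by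
  -- scalar facts
  have hi4 : i ^ 4 = 1 := hi.pow_eq_one
  have hi2 : i ^ 2 = -1 := by
    have hne : i ^ 2 ≠ 1 := hi.pow_ne_one_of_pos_of_lt (by norm_num) (by norm_num)
    have h0 : (i ^ 2 - 1) * (i ^ 2 + 1) = 0 := by linear_combination hi4
    rcases mul_eq_zero.mp h0 with h | h
    · exact absurd (by linear_combination h) hne
    · linear_combination h
  have hine : i ≠ 0 := by
    intro h; rw [h] at hi2; norm_num at hi2
  have h2ine : (2 : k) * i ≠ 0 := mul_ne_zero two_ne_zero hine
  set G₀ : Matrix (Fin 2) (Fin 2) k := !![i, 0; 0, -i] with hG₀d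
  set X₀ : Matrix (Fin 2) (Fin 2) k := !![0, 2; -1, 0] with hX₀d
  -- matrix relations
  have hG₀2 : G₀ ^ 2 = -1 := by
    rw [hG₀d]
    ext r s
    fin_cases r <;> fin_cases s <;>
      simp [pow_two, Matrix.mul_apply, Fin.sum_univ_two, Matrix.one_apply] <;>
      linear_combination hi2
  have hG₀4 : G₀ ^ 4 = 1 := by
    have h44 : G₀ ^ 4 = (G₀ ^ 2) ^ 2 := by rw [← pow_mul]
    rw [h44, hG₀2, neg_one_sq]
  have hX₀2 : X₀ ^ 2 = G₀ ^ 2 - 1 := by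
    rw [hG₀2, hX₀d]
    ext r s
    fin_cases r <;> fin_cases s <;>
      simp [pow_two, Matrix.mul_apply, Fin.sum_univ_two, Matrix.one_apply] <;> ring
  have hGX₀ : G₀ * X₀ = -(X₀ * G₀) := by
    rw [hG₀d, hX₀d]
    ext r s
    fin_cases r <;> fin_cases s <;>
      simp [Matrix.mul_apply, Fin.sum_univ_two] <;> ring
  -- the linear map and algebra map
  set φ : B →ₗ[k] Matrix (Fin 2) (Fin 2) k :=
    b.constr k (fun p => G₀ ^ ((p.1 : ℕ)) * X₀ ^ ((p.2 : ℕ))) with hφd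
  have hφb : ∀ p : Fin 4 × Fin 2, φ (b p) = G₀ ^ ((p.1 : ℕ)) * X₀ ^ ((p.2 : ℕ)) :=
    fun p => b.constr_basis k _ p
  have hφF : ∀ p : Fin 4 × Fin 2,
      φ (g ^ ((p.1 : ℕ)) * x ^ ((p.2 : ℕ))) = G₀ ^ ((p.1 : ℕ)) * X₀ ^ ((p.2 : ℕ)) := by
    intro p; rw [← hb p]; exact hφb p
  have hφF2 : ∀ (u : Fin 4) (v : Fin 2),
      φ (g ^ ((u : ℕ)) * x ^ ((v : ℕ))) = G₀ ^ ((u : ℕ)) * X₀ ^ ((v : ℕ)) :=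
    fun u v => hφF (u, v)
  have hspan : ∀ u : B, u ∈ Submodule.span k (Set.range b) := by
    intro u; rw [b.span_eq]; trivial
  have hone : φ 1 = 1 := by
    have h1 : (1 : B) = b ((0 : Fin 4), (0 : Fin 2)) := by rw [hb]; simp
    rw [h1, hφb]; simp
  have hmulbase : ∀ p q : Fin 4 × Fin 2, φ (b p * b q) = φ (b p) * φ (b q) := by
    intro p q
    rw [hb p, hb q, keyF (k := k) hg hx hgx p q, hφF p, hφF q,
      keyF (k := k) hG₀4 hX₀2 hGX₀ p q, map_smul]
    congr 1
    split_ifs with h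
    · rw [map_sub, hφF2, hφF2]
    · rw [hφF2]
  have hmul : ∀ u v : B, φ (u * v) = φ u * φ v := by
    intro u v
    induction hspan u using Submodule.span_induction with
    | mem w hw =>
      obtain ⟨p, rfl⟩ := hw
      induction hspan v using Submodule.span_induction with
      | mem z hz => obtain ⟨q, rfl⟩ := hz; exact hmulbase p q
      | zero => simp
      | add y z hy hz ihy ihz => rw [mul_add, map_add, map_add, mul_add, ihy, ihz]
      | smul t y hy ihy => rw [mul_smul_comm, map_smul, map_smul, mul_smul_comm, ihy]
    | zero => simp
    | add y z hy hz ihy ihz => rw [add_mul, map_add, map_add, add_mul, ihy, ihz]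
    | smul t y hy ihy => rw [smul_mul_assoc, map_smul, map_smul, smul_mul_assoc, ihy]
  set ρ₀ : B →ₐ[k] Matrix (Fin 2) (Fin 2) k := AlgHom.ofLinearMap φ hone hmul with hρ₀d
  have hρ₀app : ∀ u : B, ρ₀ u = φ u := fun u => rfl
  have hρg : ρ₀ g = G₀ := by
    have h1 : g = b ((1 : Fin 4), (0 : Fin 2)) := by rw [hb]; simp
    rw [hρ₀app, h1, hφb]; simp
  have hρx : ρ₀ x = X₀ := by
    have h1 : x = b ((0 : Fin 4), (1 : Fin 2)) := by rw [hb]; simp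
    rw [hρ₀app, h1, hφb]; simp
  -- invariance lemma
  have inv_lemma : ∀ (ρ' : B →ₐ[k] Matrix (Fin 2) (Fin 2) k) (W : Submodule k (Fin 2 → k)),
      (∀ v ∈ W, (ρ' g).mulVec v ∈ W) → (∀ v ∈ W, (ρ' x).mulVec v ∈ W) →
      ∀ a : B, ∀ v ∈ W, (ρ' a).mulVec v ∈ W := by
    intro ρ' W hGW hXW a v hv
    have hpow : ∀ (M : Matrix (Fin 2) (Fin 2) k), (∀ w ∈ W, M.mulVec w ∈ W) →
        ∀ (m : ℕ) (w : Fin 2 → k), w ∈ W → (M ^ m).mulVec w ∈ W := by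
      intro M hM m
      induction m with
      | zero => intro w hw; simpa using hw
      | succ m ih =>
        intro w hw
        rw [pow_succ, ← Matrix.mulVec_mulVec]
        exact ih _ (hM w hw)
    induction hspan a using Submodule.span_induction with
    | mem w hw =>
      obtain ⟨p, rfl⟩ := hw
      have h1 : ρ' (b p) = ρ' g ^ ((p.1 : ℕ)) * ρ' x ^ ((p.2 : ℕ)) := by
        rw [hb, map_mul, map_pow, map_pow]
      rw [h1, ← Matrix.mulVec_mulVec]
      exact hpow _ hGW _ _ (hpow _ hXW _ _ hv)
    | zero => rw [map_zero, Matrix.zero_mulVec]; exact W.zero_mem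
    | add y z hy hz ihy ihz => rw [map_add, Matrix.add_mulVec]; exact W.add_mem ihy ihz
    | smul t y hy ihy => rw [map_smul, Matrix.smul_mulVec]; exact W.smul_mem t ihy
  -- irreducibility of ρ₀
  have hirr : MatrixRepIrreducible ρ₀ := by
    intro W hWinv
    by_cases hWbot : W = ⊥
    · left; exact hWbot
    right
    obtain ⟨v, hvW, hvne⟩ := (Submodule.ne_bot_iff W).mp hWbot
    have hGv : G₀.mulVec v ∈ W := by have := hWinv g v hvW; rwa [hρg] at this
    have hu0 : Pi.single (0 : Fin 2) (v 0) ∈ W := by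
      have hmem := W.smul_mem ((2 * i)⁻¹) (W.add_mem hGv (W.smul_mem i hvW))
      have heq : Pi.single (0 : Fin 2) (v 0) = (2 * i)⁻¹ • (G₀.mulVec v + i • v) := by
        funext r; rw [hG₀d]
        fin_cases r <;>
          simp [Matrix.mulVec, dotProduct, Matrix.vecHead, Matrix.vecTail, Pi.smul_apply, Fin.sum_univ_two, Pi.single_apply] <;>
          field_simp <;> ring
      rw [heq]; exact hmem
    have hu1 : Pi.single (1 : Fin 2) (v 1) ∈ W := by
      have hmem := W.smul_mem ((2 * i)⁻¹) (W.sub_mem (W.smul_mem i hvW) hGv)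
      have heq : Pi.single (1 : Fin 2) (v 1) = (2 * i)⁻¹ • (i • v - G₀.mulVec v) := by
        funext r; rw [hG₀d]
        fin_cases r <;>
          simp [Matrix.mulVec, dotProduct, Matrix.vecHead, Matrix.vecTail, Pi.smul_apply, Fin.sum_univ_two, Pi.single_apply] <;>
          field_simp <;> ring
      rw [heq]; exact hmem
    have hXW : ∀ w ∈ W, X₀.mulVec w ∈ W := by
      intro w hw; have := hWinv x w hw; rwa [hρx] at this
    have hsingles : Pi.single (0 : Fin 2) (1 : k) ∈ W ∧ Pi.single (1 : Fin 2) (1 : k) ∈ W := by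
      have hv01 : v 0 ≠ 0 ∨ v 1 ≠ 0 := by
        by_contra hcon
        push_neg at hcon
        exact hvne (by funext r; fin_cases r <;> simp [hcon.1, hcon.2])
      rcases hv01 with h0 | h1
      · have he0 : Pi.single (0 : Fin 2) (1 : k) ∈ W := by
          have := W.smul_mem (v 0)⁻¹ hu0
          have heq : Pi.single (0 : Fin 2) (1 : k) = (v 0)⁻¹ • (Pi.single (0 : Fin 2) (v 0) : Fin 2 → k) := by
            funext r; fin_cases r <;> simp [Pi.single_apply] <;> field_simp
          rw [heq]; exact this
        refine ⟨he0, ?_⟩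
        have hXe0 := hXW _ he0
        have heq : Pi.single (1 : Fin 2) (1 : k) = -(X₀.mulVec (Pi.single (0 : Fin 2) (1 : k))) := by
          funext r; rw [hX₀d]
          fin_cases r <;> simp [Matrix.mulVec, dotProduct, Matrix.vecHead, Matrix.vecTail, Pi.smul_apply, Fin.sum_univ_two, Pi.single_apply]
        rw [heq]; exact W.neg_mem hXe0
      · have he1 : Pi.single (1 : Fin 2) (1 : k) ∈ W := by
          have := W.smul_mem (v 1)⁻¹ hu1
          have heq : Pi.single (1 : Fin 2) (1 : k) = (v 1)⁻¹ • (Pi.single (1 : Fin 2) (v 1) : Fin 2 → k) := by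
            funext r; fin_cases r <;> simp [Pi.single_apply] <;> field_simp
          rw [heq]; exact this
        refine ⟨?_, he1⟩
        have hXe1 := hXW _ he1
        have heq : Pi.single (0 : Fin 2) (1 : k) = (2 : k)⁻¹ • (X₀.mulVec (Pi.single (1 : Fin 2) (1 : k))) := by
          funext r; rw [hX₀d]
          fin_cases r <;> simp [Matrix.mulVec, dotProduct, Matrix.vecHead, Matrix.vecTail, Pi.smul_apply, Fin.sum_univ_two, Pi.single_apply]
        rw [heq]; exact W.smul_mem _ hXe1
    rw [Submodule.eq_top_iff']
    intro w
    have heq : w = w 0 • (Pi.single (0 : Fin 2) (1 : k) : Fin 2 → k) + w 1 • (Pi.single (1 : Fin 2) (1 : k) : Fin 2 → k) := by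
      funext r; fin_cases r <;> simp [Pi.single_apply]
    rw [heq]
    exact W.add_mem (W.smul_mem _ hsingles.1) (W.smul_mem _ hsingles.2)
  refine ⟨ρ₀, hρg, hρx, hirr, ?_⟩
  intro ρ hρirr
  set Gm : Matrix (Fin 2) (Fin 2) k := ρ g with hGmd
  set Xm : Matrix (Fin 2) (Fin 2) k := ρ x with hXmd
  have hGm4 : Gm ^ 4 = 1 := by rw [hGmd, ← map_pow, hg, map_one]
  have hXm2 : Xm ^ 2 = Gm ^ 2 - 1 := by
    rw [hXmd, hGmd, ← map_pow, hx, map_sub, map_pow, map_one]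
  have hGXm : Gm * Xm = -(Xm * Gm) := by
    rw [hGmd, hXmd, ← map_mul, hgx, map_neg, map_mul]
  have hXGm : Xm * Gm = -(Gm * Xm) := by rw [hGXm, neg_neg]
  clear_value Gm Xm
  have hρGW : ∀ (W : Submodule k (Fin 2 → k)),
      (∀ v ∈ W, Gm.mulVec v ∈ W) → (∀ v ∈ W, Xm.mulVec v ∈ W) →
      ∀ a : B, ∀ v ∈ W, (ρ a).mulVec v ∈ W := by
    intro W h1 h2
    refine inv_lemma ρ W ?_ ?_
    · intro v hv; rw [← hGmd]; exact h1 v hv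
    · intro v hv; rw [← hXmd]; exact h2 v hv
  -- Schur: Gm ^ 2 is scalar
  have hcomm2X : Gm ^ 2 * Xm = Xm * Gm ^ 2 := by
    calc Gm ^ 2 * Xm = Gm * (Gm * Xm) := by rw [pow_two, mul_assoc]
      _ = -(Gm * (Xm * Gm)) := by rw [hGXm, mul_neg]
      _ = -((Gm * Xm) * Gm) := by rw [mul_assoc]
      _ = (Xm * Gm) * Gm := by rw [hGXm, neg_mul, neg_neg]
      _ = Xm * Gm ^ 2 := by rw [mul_assoc, ← pow_two]
  obtain ⟨c, hc⟩ := Module.End.exists_eigenvalue ((Gm ^ 2).mulVecLin)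
  obtain ⟨v, hv⟩ := hc.exists_hasEigenvector
  have hGm2 : Gm ^ 2 = c • 1 := by
    set W : Submodule k (Fin 2 → k) := Module.End.eigenspace ((Gm ^ 2).mulVecLin) c with hWd
    have hWmem : ∀ w : Fin 2 → k, w ∈ W ↔ (Gm ^ 2).mulVec w = c • w := by
      intro w; rw [hWd, Module.End.mem_eigenspace_iff, Matrix.mulVecLin_apply]
    have hWG : ∀ w ∈ W, Gm.mulVec w ∈ W := by
      intro w hw
      rw [hWmem] at hw ⊢
      calc (Gm ^ 2).mulVec (Gm.mulVec w) = (Gm ^ 2 * Gm).mulVec w :=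
            Matrix.mulVec_mulVec _ _ _
        _ = (Gm * Gm ^ 2).mulVec w := by rw [((Commute.refl Gm).pow_left 2).eq]
        _ = Gm.mulVec ((Gm ^ 2).mulVec w) := (Matrix.mulVec_mulVec _ _ _).symm
        _ = Gm.mulVec (c • w) := by rw [hw]
        _ = c • Gm.mulVec w := Matrix.mulVec_smul _ _ _
    have hWX : ∀ w ∈ W, Xm.mulVec w ∈ W := by
      intro w hw
      rw [hWmem] at hw ⊢
      calc (Gm ^ 2).mulVec (Xm.mulVec w) = (Gm ^ 2 * Xm).mulVec w :=
            Matrix.mulVec_mulVec _ _ _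
        _ = (Xm * Gm ^ 2).mulVec w := by rw [hcomm2X]
        _ = Xm.mulVec ((Gm ^ 2).mulVec w) := (Matrix.mulVec_mulVec _ _ _).symm
        _ = Xm.mulVec (c • w) := by rw [hw]
        _ = c • Xm.mulVec w := Matrix.mulVec_smul _ _ _
    rcases hρirr W (hρGW W hWG hWX) with hbot | htop
    · exfalso
      have h5 : v ∈ W := hv.left
      rw [hbot, Submodule.mem_bot] at h5
      exact hv.right h5
    · refine mulVec_all_smul (fun w => (hWmem w).mp ?_)
      rw [htop]; trivial
  have hc2 : c = 1 ∨ c = -1 := by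
    have h4 : (Gm ^ 2) ^ 2 = 1 := by rw [← pow_mul]; exact hGm4
    rw [hGm2, smul_pow, one_pow] at h4
    have hcc : c ^ 2 = 1 := by
      have := congrFun (congrFun (congrArg (fun M : Matrix (Fin 2) (Fin 2) k => (M : Matrix (Fin 2) (Fin 2) k)) h4) 0) 0
      simpa [Matrix.smul_apply, Matrix.one_apply] using this
    rcases mul_eq_zero.mp (show (c - 1) * (c + 1) = 0 by linear_combination hcc) with h | h
    · left; linear_combination h
    · right; linear_combination h
  -- rule out c = 1
  have hcneg : c = -1 := by
    rcases hc2 with hc1 | hcneg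
    · exfalso
      have hXmsq0 : Xm ^ 2 = 0 := by rw [hXm2, hGm2, hc1, one_smul, sub_self]
      by_cases hX0 : Xm = 0
      · -- then Gm is scalar, every subspace invariant
        obtain ⟨μ, hμ⟩ := Module.End.exists_eigenvalue (Gm.mulVecLin)
        obtain ⟨w, hw⟩ := hμ.exists_hasEigenvector
        have hGsc : Gm = μ • 1 := by
          set W1 : Submodule k (Fin 2 → k) := Module.End.eigenspace (Gm.mulVecLin) μ with hW1d
          have hW1mem : ∀ z : Fin 2 → k, z ∈ W1 ↔ Gm.mulVec z = μ • z := by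
            intro z; rw [hW1d, Module.End.mem_eigenspace_iff, Matrix.mulVecLin_apply]
          have hW1G : ∀ z ∈ W1, Gm.mulVec z ∈ W1 := by
            intro z hz
            rw [hW1mem] at hz
            rw [hz]
            exact W1.smul_mem μ ((hW1mem z).mpr hz)
          have hW1X : ∀ z ∈ W1, Xm.mulVec z ∈ W1 := by
            intro z hz; rw [hX0, Matrix.zero_mulVec]; exact W1.zero_mem
          rcases hρirr W1 (hρGW W1 hW1G hW1X) with hbot | htop
          · exfalso
            have h5 : w ∈ W1 := hw.left
            rw [hbot, Submodule.mem_bot] at h5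
            exact hw.right h5
          · refine mulVec_all_smul (fun z => (hW1mem z).mp ?_)
            rw [htop]; trivial
        -- span of e0 is a nontrivial invariant subspace
        set e0 : Fin 2 → k := Pi.single (0 : Fin 2) (1 : k) with he0d
        set W2 : Submodule k (Fin 2 → k) := Submodule.span k {e0} with hW2d
        have hW2G : ∀ z ∈ W2, Gm.mulVec z ∈ W2 := by
          intro z hz
          rw [hGsc, Matrix.smul_mulVec, Matrix.one_mulVec]
          exact W2.smul_mem μ hz
        have hW2X : ∀ z ∈ W2, Xm.mulVec z ∈ W2 := by
          intro z hz; rw [hX0, Matrix.zero_mulVec]; exact W2.zero_mem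
        rcases hρirr W2 (hρGW W2 hW2G hW2X) with hbot | htop
        · have : e0 = 0 := Submodule.span_singleton_eq_bot.mp hbot
          have := congrFun this 0
          simp [he0d] at this
        · have hmem : (Pi.single (1 : Fin 2) (1 : k) : Fin 2 → k) ∈ W2 :=
            htop ▸ Submodule.mem_top
          obtain ⟨t, ht⟩ := Submodule.mem_span_singleton.mp hmem
          have := congrFun ht 1
          simp [he0d, Pi.single_apply] at this
      · -- Xm ≠ 0 but Xm² = 0 : kernel is a nontrivial invariant subspace
        set W3 : Submodule k (Fin 2 → k) := LinearMap.ker (Xm.mulVecLin) with hW3d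
        have hW3mem : ∀ z : Fin 2 → k, z ∈ W3 ↔ Xm.mulVec z = 0 := by
          intro z; rw [hW3d, LinearMap.mem_ker, Matrix.mulVecLin_apply]
        have hW3G : ∀ z ∈ W3, Gm.mulVec z ∈ W3 := by
          intro z hz
          rw [hW3mem] at hz ⊢
          calc Xm.mulVec (Gm.mulVec z) = (Xm * Gm).mulVec z := Matrix.mulVec_mulVec _ _ _
            _ = (-(Gm * Xm)).mulVec z := by rw [hXGm]
            _ = -((Gm * Xm).mulVec z) := Matrix.neg_mulVec _ _
            _ = -(Gm.mulVec (Xm.mulVec z)) := by rw [Matrix.mulVec_mulVec]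
            _ = 0 := by rw [hz, Matrix.mulVec_zero, neg_zero]
        have hW3X : ∀ z ∈ W3, Xm.mulVec z ∈ W3 := by
          intro z hz
          rw [hW3mem] at hz
          rw [hW3mem, hz, Matrix.mulVec_zero]
        rcases hρirr W3 (hρGW W3 hW3G hW3X) with hbot | htop
        · -- kernel trivial ⇒ Xm = 0, contradiction
          apply hX0
          apply mulVec_all_zero
          intro w
          have h1 : Xm.mulVec (Xm.mulVec w) = 0 := by
            rw [Matrix.mulVec_mulVec, ← pow_two, hXmsq0, Matrix.zero_mulVec]
          have h2 : Xm.mulVec w ∈ W3 := (hW3mem _).mpr h1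
          rw [hbot] at h2
          simpa using h2
        · apply hX0
          apply mulVec_all_zero
          intro w
          refine (hW3mem w).mp ?_
          rw [htop]; trivial
    · exact hcneg
  have hGm2' : Gm ^ 2 = -1 := by rw [hGm2, hcneg, neg_smul, one_smul]
  have hXmXm : ∀ w : Fin 2 → k, Xm.mulVec (Xm.mulVec w) = (-2 : k) • w := by
    intro w
    rw [Matrix.mulVec_mulVec, ← pow_two, hXm2, hGm2']
    have : (-1 - 1 : Matrix (Fin 2) (Fin 2) k) = (-2 : k) • 1 := by
      ext r s; simp [Matrix.smul_apply, Matrix.one_apply]; split_ifs <;> ring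
    rw [this, Matrix.smul_mulVec, Matrix.one_mulVec]
  have hXmker : ∀ w : Fin 2 → k, Xm.mulVec w = 0 → w = 0 := by
    intro w hw
    have := hXmXm w
    rw [hw, Matrix.mulVec_zero] at this
    have h2 : (-2 : k) ≠ 0 := by norm_num
    rcases smul_eq_zero.mp this.symm with h | h
    · exact absurd h h2
    · exact h
  -- eigenvector of Gm with eigenvalue i
  have hswap : ∀ (w : Fin 2 → k) (t : k), Gm.mulVec w = t • w →
      Gm.mulVec (Xm.mulVec w) = (-t) • (Xm.mulVec w) := by
    intro w t hw
    calc Gm.mulVec (Xm.mulVec w) = (Gm * Xm).mulVec w := Matrix.mulVec_mulVec _ _ _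
      _ = (-(Xm * Gm)).mulVec w := by rw [hGXm]
      _ = -((Xm * Gm).mulVec w) := Matrix.neg_mulVec _ _
      _ = -(Xm.mulVec (Gm.mulVec w)) := by rw [Matrix.mulVec_mulVec]
      _ = -(Xm.mulVec (t • w)) := by rw [hw]
      _ = -(t • Xm.mulVec w) := by rw [Matrix.mulVec_smul]
      _ = (-t) • (Xm.mulVec w) := by rw [neg_smul]
  obtain ⟨μ, hμ⟩ := Module.End.exists_eigenvalue (Gm.mulVecLin)
  obtain ⟨w0, hw0⟩ := hμ.exists_hasEigenvector
  have hw0e : Gm.mulVec w0 = μ • w0 := by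
    have := hw0.apply_eq_smul
    rwa [Matrix.mulVecLin_apply] at this
  have hw0ne : w0 ≠ 0 := hw0.right
  have hμ2 : μ ^ 2 = -1 := by
    have h1 : (Gm ^ 2).mulVec w0 = (μ ^ 2) • w0 := by
      rw [pow_two, ← Matrix.mulVec_mulVec, hw0e, Matrix.mulVec_smul, hw0e, smul_smul, ← pow_two]
    rw [hGm2'] at h1
    have h2 : -w0 = (μ ^ 2) • w0 := by
      rw [← h1]
      rw [show (-1 : Matrix (Fin 2) (Fin 2) k) = -(1 : Matrix (Fin 2) (Fin 2) k) from rfl,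
        Matrix.neg_mulVec, Matrix.one_mulVec]
    obtain ⟨r, hr⟩ := Function.ne_iff.mp hw0ne
    have h3 := congrFun h2 r
    simp [Pi.smul_apply] at h3
    have h4 : (μ ^ 2 + 1) * w0 r = 0 := by linear_combination -h3
    rcases mul_eq_zero.mp h4 with h | h
    · linear_combination h
    · exact absurd h hr
  have hμi : μ = i ∨ μ = -i := by
    rcases mul_eq_zero.mp (show (μ - i) * (μ + i) = 0 by linear_combination hμ2 - hi2) with h | h
    · left; linear_combination h
    · right; linear_combination h
  obtain ⟨u₁, hu₁ne, hGu₁⟩ : ∃ u₁ : Fin 2 → k, u₁ ≠ 0 ∧ Gm.mulVec u₁ = i • u₁ := by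
    rcases hμi with h | h
    · exact ⟨w0, hw0ne, by rw [hw0e, h]⟩
    · refine ⟨Xm.mulVec w0, ?_, ?_⟩
      · intro hz; exact hw0ne (hXmker _ hz)
      · have := hswap w0 μ hw0e
        rw [h, neg_neg] at this
        exact this
  set u₂ : Fin 2 → k := Xm.mulVec u₁ with hu₂d
  have hGu₂ : Gm.mulVec u₂ = (-i) • u₂ := hswap u₁ i hGu₁
  have hXu₂ : Xm.mulVec u₂ = (-2 : k) • u₁ := hXmXm u₁
  have hu₂ne : u₂ ≠ 0 := fun h => hu₁ne (hXmker _ h)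
  clear_value u₂
  -- linear independence
  have hdet : u₁ 0 * u₂ 1 - u₁ 1 * u₂ 0 ≠ 0 := by
    intro hdd
    have hprop : ∀ s : Fin 2, (u₂ s) • u₁ = (u₁ s) • u₂ := by
      intro s
      funext r
      fin_cases s
      · fin_cases r
        · simp only [Pi.smul_apply, smul_eq_mul, Fin.mk_zero, Fin.mk_one, Fin.isValue]; ring
        · simp only [Pi.smul_apply, smul_eq_mul, Fin.mk_zero, Fin.mk_one, Fin.isValue]; linear_combination -hdd
      · fin_cases r
        · simp only [Pi.smul_apply, smul_eq_mul, Fin.mk_zero, Fin.mk_one, Fin.isValue]; linear_combination hdd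
        · simp only [Pi.smul_apply, smul_eq_mul, Fin.mk_zero, Fin.mk_one, Fin.isValue]; ring
    have hcomp : ∀ s : Fin 2, u₂ s = 0 := by
      intro s
      have h1 := congrArg (Gm.mulVec) (hprop s)
      rw [Matrix.mulVec_smul, Matrix.mulVec_smul, hGu₁, hGu₂] at h1
      -- u₂ s • (i • u₁) = u₁ s • (-i • u₂)
      have h2 : (u₂ s * i) • u₁ = (-i * u₁ s) • u₂ := by
        rw [← smul_smul, ← smul_smul, h1, smul_comm]
      have h3 : (-i * u₁ s) • u₂ = (-i * u₂ s) • u₁ := by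
        rw [← smul_smul, ← smul_smul, hprop s, smul_comm]
      have h4 : ((2 : k) * i * u₂ s) • u₁ = 0 := by
        have := h2.trans h3
        have h5 : (u₂ s * i - -i * u₂ s) • u₁ = 0 := by
          rw [sub_smul, this, sub_self]
        convert h5 using 2
        ring
      rcases smul_eq_zero.mp h4 with h | h
      · rcases mul_eq_zero.mp h with h' | h'
        · exact absurd h' h2ine
        · exact h'
      · exact absurd h hu₁ne
    exact hu₂ne (funext hcomp)
  -- entrywise eigen-equations
  have e1 : ∀ r : Fin 2, Gm r 0 * u₁ 0 + Gm r 1 * u₁ 1 = i * u₁ r := by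
    intro r
    simpa [Matrix.mulVec, dotProduct, Fin.sum_univ_two, Pi.smul_apply]
      using congrFun hGu₁ r
  have e2 : ∀ r : Fin 2, Gm r 0 * u₂ 0 + Gm r 1 * u₂ 1 = -i * u₂ r := by
    intro r
    simpa [Matrix.mulVec, dotProduct, Fin.sum_univ_two, Pi.smul_apply]
      using congrFun hGu₂ r
  have f1 : ∀ r : Fin 2, Xm r 0 * u₁ 0 + Xm r 1 * u₁ 1 = u₂ r := by
    intro r
    simpa [Matrix.mulVec, dotProduct, Fin.sum_univ_two]
      using congrFun hu₂d.symm r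
  have f2 : ∀ r : Fin 2, Xm r 0 * u₂ 0 + Xm r 1 * u₂ 1 = -2 * u₁ r := by
    intro r
    simpa [Matrix.mulVec, dotProduct, Fin.sum_univ_two, Pi.smul_apply]
      using congrFun hXu₂ r
  -- the conjugating matrix
  set P : Matrix (Fin 2) (Fin 2) k :=
    Matrix.of (fun r s : Fin 2 => if s = 0 then u₁ r else -u₂ r) with hPd
  have hPent0 : ∀ r : Fin 2, P r 0 = u₁ r := fun r => rfl
  have hPent1 : ∀ r : Fin 2, P r 1 = -u₂ r := fun r => rfl
  have hdetP : P.det ≠ 0 := by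
    rw [Matrix.det_fin_two, hPent0, hPent0, hPent1, hPent1]
    intro h
    apply hdet
    linear_combination -h
  clear_value P
  have hPg : Gm * P = P * G₀ := by
    ext r s
    fin_cases s
    · rw [hG₀d]
      simp only [Matrix.mul_apply, Fin.sum_univ_two, Fin.mk_zero, Fin.mk_one, hPent0, hPent1,
        Matrix.of_apply, Matrix.cons_val', Matrix.cons_val_zero, Matrix.cons_val_one,
        Matrix.head_cons, Matrix.head_fin_const, Matrix.empty_val', Matrix.cons_val_fin_one]
      linear_combination e1 r
    · rw [hG₀d]
      simp only [Matrix.mul_apply, Fin.sum_univ_two, Fin.mk_zero, Fin.mk_one, hPent0, hPent1,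
        Matrix.of_apply, Matrix.cons_val', Matrix.cons_val_zero, Matrix.cons_val_one,
        Matrix.head_cons, Matrix.head_fin_const, Matrix.empty_val', Matrix.cons_val_fin_one]
      linear_combination -e2 r
  have hPx : Xm * P = P * X₀ := by
    ext r s
    fin_cases s
    · rw [hX₀d]
      simp only [Matrix.mul_apply, Fin.sum_univ_two, Fin.mk_zero, Fin.mk_one, hPent0, hPent1,
        Matrix.of_apply, Matrix.cons_val', Matrix.cons_val_zero, Matrix.cons_val_one,
        Matrix.head_cons, Matrix.head_fin_const, Matrix.empty_val', Matrix.cons_val_fin_one]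
      linear_combination f1 r
    · rw [hX₀d]
      simp only [Matrix.mul_apply, Fin.sum_univ_two, Fin.mk_zero, Fin.mk_one, hPent0, hPent1,
        Matrix.of_apply, Matrix.cons_val', Matrix.cons_val_zero, Matrix.cons_val_one,
        Matrix.head_cons, Matrix.head_fin_const, Matrix.empty_val', Matrix.cons_val_fin_one]
      linear_combination -f2 r
  have hPgn : ∀ m : ℕ, Gm ^ m * P = P * G₀ ^ m := by
    intro m
    induction m with
    | zero => simp
    | succ m ih =>
      calc Gm ^ (m + 1) * P = Gm ^ m * (Gm * P) := by rw [pow_succ, mul_assoc]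
        _ = Gm ^ m * (P * G₀) := by rw [hPg]
        _ = (Gm ^ m * P) * G₀ := by rw [mul_assoc]
        _ = P * G₀ ^ (m + 1) := by rw [ih, mul_assoc, ← pow_succ]
  have hPxn : ∀ m : ℕ, Xm ^ m * P = P * X₀ ^ m := by
    intro m
    induction m with
    | zero => simp
    | succ m ih =>
      calc Xm ^ (m + 1) * P = Xm ^ m * (Xm * P) := by rw [pow_succ, mul_assoc]
        _ = Xm ^ m * (P * X₀) := by rw [hPx]
        _ = (Xm ^ m * P) * X₀ := by rw [mul_assoc]
        _ = P * X₀ ^ (m + 1) := by rw [ih, mul_assoc, ← pow_succ]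
  have hconj : ∀ a : B, ρ a * P = P * ρ₀ a := by
    intro a
    induction hspan a using Submodule.span_induction with
    | mem w hw =>
      obtain ⟨p, rfl⟩ := hw
      have h1 : ρ (b p) = Gm ^ ((p.1 : ℕ)) * Xm ^ ((p.2 : ℕ)) := by
        rw [hb, map_mul, map_pow, map_pow, hGmd, hXmd]
      have h2 : ρ₀ (b p) = G₀ ^ ((p.1 : ℕ)) * X₀ ^ ((p.2 : ℕ)) := by
        rw [hρ₀app, hφb]
      rw [h1, h2, mul_assoc, hPxn, ← mul_assoc, hPgn, mul_assoc]
    | zero => simp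
    | add y z hy hz ihy ihz => rw [map_add, map_add, add_mul, mul_add, ihy, ihz]
    | smul t y hy ihy => rw [map_smul, map_smul, smul_mul_assoc, mul_smul_comm, ihy]
  refine ⟨Matrix.GeneralLinearGroup.mkOfDetNeZero P hdetP, ?_⟩
  intro a
  set PGL : GL (Fin 2) k := Matrix.GeneralLinearGroup.mkOfDetNeZero P hdetP with hPGLd
  have hPcoe : (PGL : Matrix (Fin 2) (Fin 2) k) = P := rfl
  have hinv : P * ((PGL⁻¹ : GL (Fin 2) k) : Matrix (Fin 2) (Fin 2) k) = 1 := by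
    rw [← hPcoe]
    exact PGL.mul_inv
  calc ρ a = ρ a * (P * ((PGL⁻¹ : GL (Fin 2) k) : Matrix (Fin 2) (Fin 2) k)) := by
        rw [hinv, mul_one]
    _ = (ρ a * P) * ((PGL⁻¹ : GL (Fin 2) k) : Matrix (Fin 2) (Fin 2) k) := by rw [mul_assoc]
    _ = (P * ρ₀ a) * ((PGL⁻¹ : GL (Fin 2) k) : Matrix (Fin 2) (Fin 2) k) := by rw [hconj a]
    _ = (PGL : Matrix (Fin 2) (Fin 2) k) * ρ₀ a * ((PGL⁻¹ : GL (Fin 2) k) : Matrix (Fin 2) (Fin 2) k) := by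
        rw [hPcoe]
end

section
/- The matrices G = diag(i,-i) and X = [[0,2],[-1,0]] in M₂(k) satisfy G⁴ = I, X² = G² - I, and GX + XG = 0; hence they define an algebra homomorphism A''₄ → M₂(k), and this representation is irreducible. -/
section aux
variable {R : Type*} [Ring R] {g x : R}

lemma pow_mod4 (hg : g ^ 4 = 1) (n : ℕ) : g ^ n = g ^ (n % 4) := by
  conv_lhs => rw [← Nat.div_add_mod n 4]
  rw [pow_add, pow_mul, hg, one_pow, one_mul]

lemma finadd (hg : g ^ 4 = 1) (a a' : Fin 4) :
    g ^ (a : ℕ) * g ^ (a' : ℕ) = g ^ (((a + a') : Fin 4) : ℕ) := by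
  rw [← pow_add, pow_mod4 hg (a + a'), pow_mod4 hg (((a + a') : Fin 4) : ℕ)]
  congr 1
  rw [Fin.val_add]
  omega

lemma finadd2 (hg : g ^ 4 = 1) (a a' : Fin 4) :
    g ^ ((a : ℕ) + (a' : ℕ) + 2) = g ^ (((a + a' + 2) : Fin 4) : ℕ) := by
  rw [pow_mod4 hg ((a:ℕ) + a' + 2), pow_mod4 hg (((a + a' + 2) : Fin 4) : ℕ)]
  congr 1
  have h1 : ((a + a' + 2 : Fin 4) : ℕ) = (((a:ℕ) + a') % 4 + 2) % 4 := by
    simp [Fin.val_add]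
  omega

lemma xg_pow_s6 (hgx : g * x = -(x * g)) (n : ℕ) :
    x * g ^ n = (-1 : ℤ) ^ n • (g ^ n * x) := by
  induction n with
  | zero => simp
  | succ m ih =>
    have hxg : x * g = -(g * x) := by rw [hgx, neg_neg]
    rw [pow_succ, ← mul_assoc, ih, smul_mul_assoc, mul_assoc, hxg, pow_succ]
    simp [smul_neg, neg_smul, mul_assoc]

lemma Lc0 (hg : g ^ 4 = 1) (a a' : Fin 4) (n : ℕ) :
    g ^ (a : ℕ) * (g ^ (a' : ℕ) * x ^ n) = g ^ (((a + a') : Fin 4) : ℕ) * x ^ n := by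
  rw [← mul_assoc, finadd hg]

lemma finadd' (hg : g ^ 4 = 1) (a a' : Fin 4) :
    g ^ ((a : ℕ) + (a' : ℕ)) = g ^ (((a + a') : Fin 4) : ℕ) := by
  rw [pow_add, finadd hg]

lemma L10 (hg : g ^ 4 = 1) (hgx : g * x = -(x * g)) (a a' : Fin 4) :
    (g ^ (a : ℕ) * x) * g ^ (a' : ℕ) =
      (-1 : ℤ) ^ (a' : ℕ) • (g ^ (((a + a') : Fin 4) : ℕ) * x) := by
  rw [mul_assoc, xg_pow_s6 hgx, mul_smul_comm, ← mul_assoc, finadd hg]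

lemma L11 (hg : g ^ 4 = 1) (hx : x ^ 2 = g ^ 2 - 1) (hgx : g * x = -(x * g)) (a a' : Fin 4) :
    (g ^ (a : ℕ) * x) * (g ^ (a' : ℕ) * x) =
      (-1 : ℤ) ^ (a' : ℕ) • (g ^ (((a + a' + 2) : Fin 4) : ℕ) - g ^ (((a + a') : Fin 4) : ℕ)) := by
  have : (g ^ (a : ℕ) * x) * (g ^ (a' : ℕ) * x) = g ^ (a:ℕ) * (x * g ^ (a':ℕ)) * x := by
    rw [mul_assoc, mul_assoc, mul_assoc]
  rw [this, xg_pow_s6 hgx, mul_smul_comm, smul_mul_assoc]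
  congr 1
  rw [mul_assoc, mul_assoc, ← pow_two, hx, ← mul_assoc, ← pow_add, mul_sub, mul_one,
    ← pow_add, finadd2 hg, finadd' hg]

end aux



/-- The matrices `G = diag(i,-i)` and `X = [[0,2],[-1,0]]` satisfy `G⁴ = I`,
`X² = G² - I` and `GX + XG = 0`; hence they define an algebra homomorphism
`A''₄ → M₂(k)`, and this representation is irreducible. -/
theorem A4pp_standard_matrices
    (k : Type*) [Field k] [IsAlgClosed k] [CharZero k]
    (i : k) (hi : IsPrimitiveRoot i 4)
    (B : Type*) [Ring B] [Algebra k B]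
    (g x : B) (hg : g ^ 4 = 1) (hx : x ^ 2 = g ^ 2 - 1) (hgx : g * x = -(x * g))
    (b : Module.Basis (Fin 4 × Fin 2) k B)
    (hb : ∀ p : Fin 4 × Fin 2, b p = g ^ (p.1 : ℕ) * x ^ (p.2 : ℕ))
    (G X : Matrix (Fin 2) (Fin 2) k)
    (hG : G = !![i, 0; 0, -i]) (hX : X = !![0, 2; -1, 0]) :
    G ^ 4 = 1 ∧ X ^ 2 = G ^ 2 - 1 ∧ G * X + X * G = 0 ∧
    (∃ ρ : B →ₐ[k] Matrix (Fin 2) (Fin 2) k, ρ g = G ∧ ρ x = X ∧ MatrixRepIrreducible ρ) := by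
  -- i^2 = -1
  have h4 : i ^ 4 = 1 := hi.pow_eq_one
  have h2ne : i ^ 2 ≠ 1 := by
    intro h
    have := hi.dvd_of_pow_eq_one 2 h
    omega
  have i2 : i ^ 2 = -1 := by
    have hfac : (i ^ 2 - 1) * (i ^ 2 + 1) = 0 := by linear_combination h4
    rcases mul_eq_zero.1 hfac with h | h
    · exact absurd (sub_eq_zero.mp h) h2ne
    · exact eq_neg_of_add_eq_zero_left h
  -- matrix relations
  have hG2 : G ^ 2 = -1 := by
    rw [hG, pow_two]
    ext a c
    fin_cases a <;> fin_cases c <;>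
      simp [Matrix.mul_apply, Fin.sum_univ_two, Matrix.one_apply] <;> linear_combination i2
  have hGm : G ^ 4 = 1 := by
    rw [show (4:ℕ) = 2*2 from rfl, pow_mul, hG2, neg_one_sq]
  have hXm : X ^ 2 = G ^ 2 - 1 := by
    rw [hG2, hX, pow_two]
    ext a c
    fin_cases a <;> fin_cases c <;>
      simp [Matrix.mul_apply, Fin.sum_univ_two, Matrix.one_apply] <;> norm_num
  have hGXm : G * X = -(X * G) := by
    rw [hG, hX]
    ext a c
    fin_cases a <;> fin_cases c <;>
      simp [Matrix.mul_apply, Fin.sum_univ_two] <;> ring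
  refine ⟨hGm, hXm, by rw [hGXm, neg_add_cancel], ?_⟩
  -- the linear map determined by the basis
  set F : B →ₗ[k] Matrix (Fin 2) (Fin 2) k :=
    b.constr k (fun p => G ^ (p.1 : ℕ) * X ^ (p.2 : ℕ)) with hFdef
  have hF : ∀ p : Fin 4 × Fin 2, F (b p) = G ^ (p.1 : ℕ) * X ^ (p.2 : ℕ) := fun p =>
    b.constr_basis k _ p
  have hb0 : ∀ r : Fin 4, g ^ (r : ℕ) = b (r, 0) := fun r => by simp [hb]
  have hb1 : ∀ r : Fin 4, g ^ (r : ℕ) * x = b (r, 1) := fun r => by simp [hb]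
  have hF0 : ∀ r : Fin 4, F (b (r, 0)) = G ^ (r : ℕ) := fun r => by simp [hF]
  have hF1 : ∀ r : Fin 4, F (b (r, 1)) = G ^ (r : ℕ) * X := fun r => by simp [hF]
  have key : ∀ p q : Fin 4 × Fin 2, F (b p * b q) = F (b p) * F (b q) := by
    rintro ⟨a, c⟩ ⟨a', c'⟩
    fin_cases c <;> fin_cases c' <;>
        simp only [hb, Fin.val_zero, Fin.val_one, pow_zero, pow_one, mul_one, Fin.isValue]
    · rw [finadd hg, hb0, hb0, hb0, hF0, hF0, hF0, finadd hGm]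
    · rw [← mul_assoc, finadd hg, hb1, hb1, hb0, hF1, hF1, hF0, ← mul_assoc, finadd hGm]
    · rw [L10 hg hgx, hb1, hb1, hb0, map_zsmul, hF1, hF1, hF0, L10 hGm hGXm]
    · rw [L11 hg hx hgx, hb1, hb1, hb0, hb0, map_zsmul, map_sub, hF1, hF1, hF0, hF0,
        L11 hGm hXm hGXm]
  have hmul : ∀ u v : B, F (u * v) = F u * F v := by
    have heq : (LinearMap.mul k B).compr₂ F =
        (LinearMap.mul k (Matrix (Fin 2) (Fin 2) k)).compl₁₂ F F := by
      apply b.ext; intro p; apply b.ext; intro q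
      simpa using key p q
    intro u v
    simpa using LinearMap.congr_fun (LinearMap.congr_fun heq u) v
  have hone : F 1 = 1 := by
    have h1 : (1 : B) = b (0, 0) := by simp [hb]
    rw [h1, hF0]; simp
  set ρ : B →ₐ[k] Matrix (Fin 2) (Fin 2) k := AlgHom.ofLinearMap F hone hmul with hρdef
  have hρg : ρ g = G := by
    show F g = G
    have hgb : g = b (1, 0) := by simp [hb]
    rw [hgb, hF0]; simp
  have hρx : ρ x = X := by
    show F x = X
    have hxb : x = b (0, 1) := by simp [hb]
    rw [hxb, hF1]; simp
  refine ⟨ρ, hρg, hρx, ?_⟩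
  intro W hW
  by_cases hbot : W = ⊥
  · exact Or.inl hbot
  right
  obtain ⟨v, hvW, hv0⟩ := Submodule.exists_mem_ne_zero_of_ne_bot hbot
  have hGv : ∀ u : Fin 2 → k, G.mulVec u = ![i * u 0, -i * u 1] := by
    intro u; funext j
    fin_cases j <;> simp [hG, Matrix.mulVec, dotProduct, Fin.sum_univ_two]
  have hXv : ∀ u : Fin 2 → k, X.mulVec u = ![2 * u 1, -u 0] := by
    intro u; funext j
    fin_cases j <;> simp [hX, Matrix.mulVec, dotProduct, Fin.sum_univ_two]
  have hine : i ≠ 0 := by intro h; rw [h] at i2; norm_num at i2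
  have h2k : (2 : k) ≠ 0 := two_ne_zero
  have c01 : (![(1:k), 0]) ∈ W → (![(0:k), 1]) ∈ W := by
    intro h
    have hx1 := hW x _ h
    rw [hρx, hXv] at hx1
    have hmem := W.smul_mem (-1 : k) hx1
    convert hmem using 1
    funext j; fin_cases j <;> norm_num
  have c10 : (![(0:k), 1]) ∈ W → (![(1:k), 0]) ∈ W := by
    intro h
    have hx1 := hW x _ h
    rw [hρx, hXv] at hx1
    have hmem := W.smul_mem (2⁻¹ : k) hx1
    convert hmem using 1
    funext j; fin_cases j <;> norm_num
  have hGvW := hW g v hvW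
  rw [hρg, hGv] at hGvW
  have w2 : (![2 * i * v 0, (0:k)]) ∈ W := by
    have hmem := W.add_mem (W.smul_mem i hvW) hGvW
    convert hmem using 1
    funext j; fin_cases j <;> simp <;> ring
  have w1 : (![(0:k), 2 * i * v 1]) ∈ W := by
    have hmem := W.sub_mem (W.smul_mem i hvW) hGvW
    convert hmem using 1
    funext j; fin_cases j <;> simp <;> ring
  have hcases : v 0 ≠ 0 ∨ v 1 ≠ 0 := by
    by_contra hcon
    push_neg at hcon
    apply hv0
    funext j; fin_cases j
    · exact hcon.1
    · exact hcon.2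
  have hboth : (![(1:k), 0]) ∈ W ∧ (![(0:k), 1]) ∈ W := by
    have hor : (![(1:k), 0]) ∈ W ∨ (![(0:k), 1]) ∈ W := by
      rcases hcases with h0 | h1
      · left
        have hne : 2 * i * v 0 ≠ 0 := by
          simp [hine, h0, h2k]
        have hmem := W.smul_mem (2 * i * v 0)⁻¹ w2
        convert hmem using 1
        funext j; fin_cases j <;> simp <;> field_simp <;> ring
      · right
        have hne : 2 * i * v 1 ≠ 0 := by
          simp [hine, h1, h2k]
        have hmem := W.smul_mem (2 * i * v 1)⁻¹ w1
        convert hmem using 1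
        funext j; fin_cases j <;> simp <;> field_simp <;> ring
    rcases hor with h | h
    · exact ⟨h, c01 h⟩
    · exact ⟨c10 h, h⟩
  rw [eq_top_iff]
  intro u _
  have hu : u = u 0 • ![(1:k), 0] + u 1 • ![(0:k), 1] := by
    funext j; fin_cases j <;> simp
  rw [hu]
  exact W.add_mem (W.smul_mem _ hboth.1) (W.smul_mem _ hboth.2)
end

section
/- Let e_{ij} = E_{ij}∘ρ be the comatrix elements of A = (A''₄)* arising from the simple 2-dimensional representation ρ of A''₄ with ρ(g)=diag(ξ,-ξ) (ξ a primitive 4th root of 1) and ρ(x)=[[0,2],[-1,0]]. Then under the convolution product of A: e₁₁² = e₂₂² = α, e₁₂² = e₂₁² = 0, where α is the character g↦-1, x↦0. -/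
open TensorProduct

/-- The convolution product on the dual of a coalgebra. -/
noncomputable def convProd (k : Type*) [CommRing k] {B : Type*} [AddCommGroup B] [Module k B]
    [Coalgebra k B] (f h : B →ₗ[k] k) : B →ₗ[k] k :=
  (LinearMap.mul' k k) ∘ₗ (TensorProduct.map f h) ∘ₗ Coalgebra.comul

/-- For the comatrix elements `e_{ij} = E_{ij}∘ρ` of `A = (A''₄)*` arising from
the simple 2-dimensional representation `ρ(g) = diag(ξ,-ξ)`, `ρ(x) = [[0,2],[-1,0]]`, one has
`e₁₁² = e₂₂² = α` and `e₁₂² = e₂₁² = 0` under the convolution product, where `α` is the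
character `g ↦ -1, x ↦ 0`. -/
theorem A4pp_dual_comatrix_squares
    (k : Type*) [Field k] [IsAlgClosed k] [CharZero k]
    (ξ : k) (hξ : IsPrimitiveRoot ξ 4)
    (B : Type*) [Ring B] [Bialgebra k B]
    (g x : B) (hg : g ^ 4 = 1) (hx : x ^ 2 = g ^ 2 - 1) (hgx : g * x = -(x * g))
    (b : Module.Basis (Fin 4 × Fin 2) k B)
    (hb : ∀ p : Fin 4 × Fin 2, b p = g ^ (p.1 : ℕ) * x ^ (p.2 : ℕ))
    (hcg : Coalgebra.comul (R := k) g = g ⊗ₜ[k] g)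
    (hcx : Coalgebra.comul (R := k) x = x ⊗ₜ[k] g + 1 ⊗ₜ[k] x)
    (ρ : B →ₐ[k] Matrix (Fin 2) (Fin 2) k)
    (hρg : ρ g = !![ξ, 0; 0, -ξ]) (hρx : ρ x = !![0, 2; -1, 0])
    (e : Fin 2 → Fin 2 → (B →ₗ[k] k))
    (he : ∀ i j : Fin 2, ∀ a : B, e i j a = ρ a i j)
    (α : B →ₐ[k] k) (hαg : α g = -1) (hαx : α x = 0) :
    convProd k (e 0 0) (e 0 0) = α.toLinearMap ∧
    convProd k (e 1 1) (e 1 1) = α.toLinearMap ∧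
    convProd k (e 0 1) (e 0 1) = 0 ∧
    convProd k (e 1 0) (e 1 0) = 0 := by
  -- ξ² = -1
  have hξ4 : ξ ^ 4 = 1 := hξ.pow_eq_one
  have hξ2 : ξ ^ 2 = -1 := by
    have h2 : ξ ^ 2 ≠ 1 := hξ.pow_ne_one_of_pos_of_lt (by norm_num) (by norm_num)
    have : (ξ ^ 2 - 1) * (ξ ^ 2 + 1) = 0 := by ring_nf; linear_combination hξ4
    rcases mul_eq_zero.1 this with h | h
    · exact absurd (sub_eq_zero.1 h) h2
    · exact eq_neg_of_add_eq_zero_left h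
  -- comul on powers of g and on gⁿx
  have hcomul_pow : ∀ n : ℕ, Coalgebra.comul (R := k) (g ^ n) = (g ^ n) ⊗ₜ[k] (g ^ n) := by
    intro n
    rw [Bialgebra.comul_pow, hcg, Algebra.TensorProduct.tmul_pow]
  have hcomul_powx : ∀ n : ℕ, Coalgebra.comul (R := k) (g ^ n * x) =
      (g ^ n * x) ⊗ₜ[k] (g ^ (n + 1)) + (g ^ n) ⊗ₜ[k] (g ^ n * x) := by
    intro n
    rw [Bialgebra.comul_mul, hcomul_pow, hcx, mul_add, Algebra.TensorProduct.tmul_mul_tmul,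
      Algebra.TensorProduct.tmul_mul_tmul, mul_one, pow_succ]
  -- ρ on powers of g
  have hρgn : ∀ n : ℕ, ρ (g ^ n) = !![ξ ^ n, 0; 0, (-ξ) ^ n] := by
    intro n
    induction n with
    | zero => simp [Matrix.one_fin_two]
    | succ m ih =>
      rw [pow_succ, map_mul, ih, hρg, pow_succ, pow_succ]
      ext i j
      fin_cases i <;> fin_cases j <;> simp [Matrix.mul_apply, Fin.sum_univ_succ] <;> ring
  have hρgnx : ∀ n : ℕ, ρ (g ^ n * x) = !![0, 2 * ξ ^ n; -(-ξ) ^ n, 0] := by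
    intro n
    rw [map_mul, hρgn, hρx]
    ext i j
    fin_cases i <;> fin_cases j <;> simp [Matrix.mul_apply, Fin.sum_univ_succ] <;> ring
  -- α values
  have hαgn : ∀ n : ℕ, α (g ^ n) = (-1) ^ n := by intro n; rw [map_pow, hαg]
  have hαgnx : ∀ n : ℕ, α (g ^ n * x) = 0 := by intro n; rw [map_mul, hαx, mul_zero]
  have key : ∀ f h : B →ₗ[k] k, ∀ a : B,
      convProd k f h a = (LinearMap.mul' k k) (TensorProduct.map f h (Coalgebra.comul a)) := by
    intro f h a; rfl
  have key2 : ∀ n : ℕ, (ξ ^ n) ^ 2 = (-1 : k) ^ n := by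
    intro n; rw [← pow_mul, mul_comm, pow_mul, hξ2]
  have key3 : ∀ n : ℕ, ((-1 : k) ^ n) ^ 2 = 1 := by
    intro n; rw [← pow_mul, mul_comm, pow_mul, neg_one_sq, one_pow]
  have key4 : ∀ n : ℕ, ((-ξ) ^ n) ^ 2 = (-1 : k) ^ n := by
    intro n; rw [← pow_mul, mul_comm, pow_mul, neg_sq, hξ2]
  refine ⟨?_, ?_, ?_, ?_⟩ <;>
  · apply b.ext
    rintro ⟨i, j⟩
    rw [hb]
    fin_cases j
    · simp only [Fin.isValue, Fin.val_zero, pow_zero, mul_one, key, hcomul_pow, map_tmul,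
        LinearMap.mul'_apply, he, hρgn, AlgHom.toLinearMap_apply, hαgn, LinearMap.zero_apply]
      simp [Matrix.of_apply, mul_pow, key2, key3, key4, ← sq]
    · simp only [Fin.isValue, Fin.val_one, pow_one, key, hcomul_powx, map_add, map_tmul,
        LinearMap.mul'_apply, he, hρgn, hρgnx, AlgHom.toLinearMap_apply, hαgnx,
        LinearMap.zero_apply]
      simp [Matrix.of_apply]
end

section
/- With notation as before, the comatrix elements of A = (A''₄)* satisfy e₁₁e₂₂ = e₂₂e₁₁ = ε and e₁₂e₂₁ = e₂₁e₁₂ = 0 under the convolution product. -/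
open TensorProduct

/-- The comatrix elements of `A = (A''₄)*` satisfy `e₁₁e₂₂ = e₂₂e₁₁ = ε` and
`e₁₂e₂₁ = e₂₁e₁₂ = 0` under the convolution product. -/
theorem A4pp_dual_comatrix_products
    (k : Type*) [Field k] [IsAlgClosed k] [CharZero k]
    (ξ : k) (hξ : IsPrimitiveRoot ξ 4)
    (B : Type*) [Ring B] [Bialgebra k B]
    (g x : B) (hg : g ^ 4 = 1) (hx : x ^ 2 = g ^ 2 - 1) (hgx : g * x = -(x * g))
    (b : Module.Basis (Fin 4 × Fin 2) k B)
    (hb : ∀ p : Fin 4 × Fin 2, b p = g ^ (p.1 : ℕ) * x ^ (p.2 : ℕ))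
    (hcg : Coalgebra.comul (R := k) g = g ⊗ₜ[k] g)
    (hcx : Coalgebra.comul (R := k) x = x ⊗ₜ[k] g + 1 ⊗ₜ[k] x)
    (ρ : B →ₐ[k] Matrix (Fin 2) (Fin 2) k)
    (hρg : ρ g = !![ξ, 0; 0, -ξ]) (hρx : ρ x = !![0, 2; -1, 0])
    (e : Fin 2 → Fin 2 → (B →ₗ[k] k))
    (he : ∀ i j : Fin 2, ∀ a : B, e i j a = ρ a i j)
    :
    convProd k (e 0 0) (e 1 1) = Coalgebra.counit ∧
    convProd k (e 1 1) (e 0 0) = Coalgebra.counit ∧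
    convProd k (e 0 1) (e 1 0) = 0 ∧
    convProd k (e 1 0) (e 0 1) = 0 := by
  -- ξ² = -1
  have hξ2 : ξ ^ 2 = -1 := by
    have h4 : ξ ^ 4 = 1 := hξ.pow_eq_one
    have hne : ξ ^ 2 ≠ 1 := hξ.pow_ne_one_of_pos_of_lt (by norm_num) (by norm_num)
    have hfac : (ξ ^ 2 - 1) * (ξ ^ 2 + 1) = 0 := by linear_combination h4
    rcases mul_eq_zero.1 hfac with h | h
    · exact absurd (sub_eq_zero.1 h) hne
    · linear_combination h
  -- counit of g is 1
  have hg0 : g ≠ 0 := by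
    have hne := b.ne_zero (1, 0)
    rw [hb] at hne; simpa using hne
  have hcg1 : Coalgebra.counit (R := k) g = 1 := by
    have h1 := Coalgebra.rTensor_counit_comul (R := k) g
    rw [hcg, LinearMap.rTensor_tmul] at h1
    have h2 := congrArg (TensorProduct.lid k B) h1
    simp only [TensorProduct.lid_tmul, one_smul] at h2
    apply smul_left_injective k hg0
    simpa using h2
  -- counit of x is 0
  have hcx0 : Coalgebra.counit (R := k) x = 0 := by
    have h2 : (Coalgebra.counit (R := k) x) ^ 2 = 0 := by
      rw [← Bialgebra.counit_pow, hx, map_sub, Bialgebra.counit_pow, hcg1]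
      simp
    exact pow_eq_zero_iff two_ne_zero |>.1 h2
  -- comul on powers of g
  have hcomul_gn : ∀ n : ℕ, Coalgebra.comul (R := k) (g ^ n) = (g ^ n) ⊗ₜ[k] (g ^ n) := by
    intro n
    rw [Bialgebra.comul_pow, hcg, Algebra.TensorProduct.tmul_pow]
  have hcomul_gnx : ∀ n : ℕ, Coalgebra.comul (R := k) (g ^ n * x) =
      (g ^ n * x) ⊗ₜ[k] (g ^ (n + 1)) + (g ^ n) ⊗ₜ[k] (g ^ n * x) := by
    intro n
    rw [Bialgebra.comul_mul, hcomul_gn, hcx, mul_add, Algebra.TensorProduct.tmul_mul_tmul,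
      Algebra.TensorProduct.tmul_mul_tmul, mul_one, ← pow_succ]
  -- matrix of ρ on powers of g
  have hρgn : ∀ n : ℕ, ρ (g ^ n) = Matrix.diagonal ![ξ ^ n, (-ξ) ^ n] := by
    intro n
    have hd : ρ g = Matrix.diagonal ![ξ, -ξ] := by
      rw [hρg]; ext i j; fin_cases i <;> fin_cases j <;> simp [Matrix.diagonal]
    rw [map_pow, hd, Matrix.diagonal_pow]
    ext i j; fin_cases i <;> fin_cases j <;> simp [Matrix.diagonal, Pi.pow_apply]
  -- entry values
  have he00g : ∀ n : ℕ, e 0 0 (g ^ n) = ξ ^ n := by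
    intro n; rw [he, hρgn]; simp [Matrix.diagonal]
  have he11g : ∀ n : ℕ, e 1 1 (g ^ n) = (-ξ) ^ n := by
    intro n; rw [he, hρgn]; simp [Matrix.diagonal]
  have he01g : ∀ n : ℕ, e 0 1 (g ^ n) = 0 := by
    intro n; rw [he, hρgn]; simp [Matrix.diagonal]
  have he10g : ∀ n : ℕ, e 1 0 (g ^ n) = 0 := by
    intro n; rw [he, hρgn]; simp [Matrix.diagonal]
  have he00gx : ∀ n : ℕ, e 0 0 (g ^ n * x) = 0 := by
    intro n; rw [he, map_mul, hρgn, hρx, Matrix.diagonal_mul]; simp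
  have he11gx : ∀ n : ℕ, e 1 1 (g ^ n * x) = 0 := by
    intro n; rw [he, map_mul, hρgn, hρx, Matrix.diagonal_mul]; simp
  -- counit values
  have hcounit_gn : ∀ n : ℕ, Coalgebra.counit (R := k) (g ^ n) = 1 := by
    intro n; rw [Bialgebra.counit_pow, hcg1, one_pow]
  have hcounit_gnx : ∀ n : ℕ, Coalgebra.counit (R := k) (g ^ n * x) = 0 := by
    intro n; rw [Bialgebra.counit_mul, hcounit_gn, hcx0, mul_zero]
  -- evaluation of convProd
  have hconv0 : ∀ f h : B →ₗ[k] k, ∀ n : ℕ,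
      convProd k f h (g ^ n) = f (g ^ n) * h (g ^ n) := by
    intro f h n
    simp [convProd, hcomul_gn n]
  have hconv1 : ∀ f h : B →ₗ[k] k, ∀ n : ℕ,
      convProd k f h (g ^ n * x) =
        f (g ^ n * x) * h (g ^ (n + 1)) + f (g ^ n) * h (g ^ n * x) := by
    intro f h n
    simp [convProd, hcomul_gnx n]
  have hone : -(ξ * ξ) = 1 := by linear_combination -hξ2
  refine ⟨?_, ?_, ?_, ?_⟩ <;>
    refine b.ext fun p => ?_ <;>
    obtain ⟨i, j⟩ := p <;>
    rw [hb] <;>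
    fin_cases j <;>
    simp only [Fin.val_zero, Fin.val_one, pow_zero, pow_one, mul_one] <;>
    simp [hconv0, hconv1, he00g, he11g, he01g, he10g, he00gx, he11gx,
      hcounit_gn, hcounit_gnx, ← mul_pow, hone]
end

section
/- With notation as before, the comatrix elements of A = (A''₄)* satisfy the commutation relations e₁₂e₁₁ = ξe₁₁e₁₂, e₂₁e₁₁ = ξe₁₁e₂₁, e₁₂e₂₂ = -ξe₂₂e₁₂, and e₂₁e₂₂ = -ξe₂₂e₂₁. -/
open TensorProduct

/-- The comatrix elements of `A = (A''₄)*` satisfy the commutation relations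
`e₁₂e₁₁ = ξe₁₁e₁₂`, `e₂₁e₁₁ = ξe₁₁e₂₁`, `e₁₂e₂₂ = -ξe₂₂e₁₂` and `e₂₁e₂₂ = -ξe₂₂e₂₁`. -/
theorem A4pp_dual_comatrix_commutation
    (k : Type*) [Field k] [IsAlgClosed k] [CharZero k]
    (ξ : k) (hξ : IsPrimitiveRoot ξ 4)
    (B : Type*) [Ring B] [Bialgebra k B]
    (g x : B) (hg : g ^ 4 = 1) (hx : x ^ 2 = g ^ 2 - 1) (hgx : g * x = -(x * g))
    (b : Module.Basis (Fin 4 × Fin 2) k B)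
    (hb : ∀ p : Fin 4 × Fin 2, b p = g ^ (p.1 : ℕ) * x ^ (p.2 : ℕ))
    (hcg : Coalgebra.comul (R := k) g = g ⊗ₜ[k] g)
    (hcx : Coalgebra.comul (R := k) x = x ⊗ₜ[k] g + 1 ⊗ₜ[k] x)
    (ρ : B →ₐ[k] Matrix (Fin 2) (Fin 2) k)
    (hρg : ρ g = !![ξ, 0; 0, -ξ]) (hρx : ρ x = !![0, 2; -1, 0])
    (e : Fin 2 → Fin 2 → (B →ₗ[k] k))
    (he : ∀ i j : Fin 2, ∀ a : B, e i j a = ρ a i j)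
    :
    convProd k (e 0 1) (e 0 0) = ξ • convProd k (e 0 0) (e 0 1) ∧
    convProd k (e 1 0) (e 0 0) = ξ • convProd k (e 0 0) (e 1 0) ∧
    convProd k (e 0 1) (e 1 1) = (-ξ) • convProd k (e 1 1) (e 0 1) ∧
    convProd k (e 1 0) (e 1 1) = (-ξ) • convProd k (e 1 1) (e 1 0) := by
  have comul_gi : ∀ i : ℕ, Coalgebra.comul (R := k) (g ^ i) = (g ^ i) ⊗ₜ[k] (g ^ i) := by
    intro i
    rw [Bialgebra.comul_pow, hcg, Algebra.TensorProduct.tmul_pow]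
  have comul_gix : ∀ i : ℕ, Coalgebra.comul (R := k) (g ^ i * x)
      = (g ^ i * x) ⊗ₜ[k] (g ^ (i + 1)) + (g ^ i) ⊗ₜ[k] (g ^ i * x) := by
    intro i
    rw [Bialgebra.comul_mul, comul_gi, hcx, mul_add, Algebra.TensorProduct.tmul_mul_tmul,
      Algebra.TensorProduct.tmul_mul_tmul, mul_one, pow_succ]
  have key : ∀ (f h : B →ₗ[k] k) (a : B),
      convProd k f h a = (LinearMap.mul' k k) ((TensorProduct.map f h) (Coalgebra.comul a)) :=
    fun _ _ _ => rfl
  have hpow : ∀ i : ℕ, ρ (g ^ i) = !![ξ ^ i, 0; 0, (-ξ) ^ i] := by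
    intro i
    induction i with
    | zero =>
        rw [pow_zero, map_one]
        ext i j
        fin_cases i <;> fin_cases j <;> simp [Matrix.one_apply]
    | succ n ih =>
        rw [pow_succ, map_mul, ih, hρg]
        ext i j
        fin_cases i <;> fin_cases j <;>
          simp [Matrix.mul_apply, Fin.sum_univ_succ, pow_succ] <;> ring
  have hρgx : ∀ i : ℕ, ρ (g ^ i * x) = !![0, 2 * ξ ^ i; -(-ξ) ^ i, 0] := by
    intro i
    rw [map_mul, hpow, hρx]
    ext a c
    fin_cases a <;> fin_cases c <;>
      simp [Matrix.mul_apply, Fin.sum_univ_succ] <;> ring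
  have comul_gx := comul_gix 1
  have hgx1 := hρgx 1
  simp only [pow_one] at comul_gx hgx1
  refine ⟨?_, ?_, ?_, ?_⟩ <;>
  · apply b.ext
    intro p
    rw [hb]
    fin_cases p <;>
      simp only [Fin.isValue, Fin.val_zero, Fin.val_one, pow_zero, pow_one, mul_one, one_mul,
        LinearMap.smul_apply, smul_eq_mul, key, comul_gi, comul_gix, comul_gx,
        Bialgebra.comul_one, Algebra.TensorProduct.one_def, hcg, hcx, map_add,
        TensorProduct.map_tmul, LinearMap.mul'_apply, he, map_one, Matrix.one_apply,
        hpow, hρgx, hgx1, hρg, hρx] <;>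
      simp <;> try ring_nf
    all_goals simp [mul_comm]
end

section
/- In A = (A''₄)*, the elements e₁₁e₁₂ and e₁₁e₂₁ are non-trivial skew-primitives: Δ(e₁₁e₁₂) = e₁₁e₁₂⊗ε + α⊗e₁₁e₁₂ and Δ(e₁₁e₂₁) = e₁₁e₂₁⊗α + ε⊗e₁₁e₂₁. -/
open TensorProduct

/-- In `A = (A''₄)*`, the elements `e₁₁e₁₂` and `e₁₁e₂₁` are non-trivial
skew-primitives: `Δ(e₁₁e₁₂) = e₁₁e₁₂ ⊗ ε + α ⊗ e₁₁e₁₂` and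
`Δ(e₁₁e₂₁) = e₁₁e₂₁ ⊗ α + ε ⊗ e₁₁e₂₁`. (Since the comultiplication of the dual is dual to
the multiplication, the skew-primitivity of `y` with respect to group-likes `α, ε` is
expressed by `y(ab) = y(a)ε(b) + α(a)y(b)`; `y` is non-trivial iff `y ∉ k·(ε - α)`.) -/
theorem A4pp_dual_skew_primitives
    (k : Type*) [Field k] [IsAlgClosed k] [CharZero k]
    (ξ : k) (hξ : IsPrimitiveRoot ξ 4)
    (B : Type*) [Ring B] [Bialgebra k B]
    (g x : B) (hg : g ^ 4 = 1) (hx : x ^ 2 = g ^ 2 - 1) (hgx : g * x = -(x * g))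
    (b : Module.Basis (Fin 4 × Fin 2) k B)
    (hb : ∀ p : Fin 4 × Fin 2, b p = g ^ (p.1 : ℕ) * x ^ (p.2 : ℕ))
    (hcg : Coalgebra.comul (R := k) g = g ⊗ₜ[k] g)
    (hcx : Coalgebra.comul (R := k) x = x ⊗ₜ[k] g + 1 ⊗ₜ[k] x)
    (ρ : B →ₐ[k] Matrix (Fin 2) (Fin 2) k)
    (hρg : ρ g = !![ξ, 0; 0, -ξ]) (hρx : ρ x = !![0, 2; -1, 0])
    (e : Fin 2 → Fin 2 → (B →ₗ[k] k))
    (he : ∀ i j : Fin 2, ∀ a : B, e i j a = ρ a i j)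
    (α : B →ₐ[k] k) (hαg : α g = -1) (hαx : α x = 0) :
    (∀ a c : B, convProd k (e 0 0) (e 0 1) (a * c) =
        convProd k (e 0 0) (e 0 1) a * Coalgebra.counit c
          + α a * convProd k (e 0 0) (e 0 1) c) ∧
    (∀ t : k, convProd k (e 0 0) (e 0 1) ≠ t • (Coalgebra.counit - α.toLinearMap)) ∧
    (∀ a c : B, convProd k (e 0 0) (e 1 0) (a * c) =
        convProd k (e 0 0) (e 1 0) a * α c
          + Coalgebra.counit a * convProd k (e 0 0) (e 1 0) c) ∧
    (∀ t : k, convProd k (e 0 0) (e 1 0) ≠ t • (α.toLinearMap - Coalgebra.counit)) := by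
  have hξ2 : ξ ^ 2 = -1 := by
    have h4 : ξ ^ 4 = 1 := hξ.pow_eq_one
    have h2 : ξ ^ 2 ≠ 1 := hξ.pow_ne_one_of_pos_of_lt (by norm_num) (by norm_num)
    have h0 : (ξ ^ 2 - 1) * (ξ ^ 2 + 1) = 0 := by linear_combination h4
    rcases mul_eq_zero.1 h0 with h | h
    · exact absurd (by linear_combination h) h2
    · linear_combination h
  -- g is a basis vector, hence nonzero
  have hbg : b (1, 0) = g := by rw [hb]; norm_num
  have hgne : g ≠ 0 := hbg ▸ b.ne_zero (1, 0)
  -- counit values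
  have hεg : Coalgebra.counit (R := k) g = 1 := by
    have h := Coalgebra.rTensor_counit_comul (R := k) g
    rw [hcg, LinearMap.rTensor_tmul] at h
    have h2 := congrArg (TensorProduct.lid k B) h
    simp only [lid_tmul, one_smul] at h2
    have h3 : (Coalgebra.counit (R := k) g - 1) • g = 0 := by
      rw [sub_smul, one_smul, h2, sub_self]
    rcases smul_eq_zero.1 h3 with h4 | h4
    · linear_combination h4
    · exact absurd h4 hgne
  have hεx : Coalgebra.counit (R := k) x = 0 := by
    have h := Coalgebra.rTensor_counit_comul (R := k) x
    rw [hcx, map_add, LinearMap.rTensor_tmul, LinearMap.rTensor_tmul] at h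
    have h2 := congrArg (TensorProduct.lid k B) h
    simp only [map_add, lid_tmul, one_smul, Bialgebra.counit_one] at h2
    have h3 : (Coalgebra.counit (R := k) x) • g = 0 := by
      have h5 : Coalgebra.counit (R := k) x • g + x = x := h2
      linear_combination (norm := module) h5
    rcases smul_eq_zero.1 h3 with h4 | h4
    · exact h4
    · exact absurd h4 hgne
  have hε0 : ∀ m : ℕ, Coalgebra.counit (R := k) (g ^ m) = 1 := by
    intro m; rw [Bialgebra.counit_pow, hεg, one_pow]
  have hεgx : ∀ m : ℕ, Coalgebra.counit (R := k) (g ^ m * x) = 0 := by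
    intro m; rw [Bialgebra.counit_mul, hεx, mul_zero]
  -- α values
  have hα0 : ∀ m : ℕ, α (g ^ m) = (-1 : k) ^ m := by
    intro m; rw [map_pow, hαg]
  have hαgx : ∀ m : ℕ, α (g ^ m * x) = 0 := by
    intro m; rw [map_mul, hαx, mul_zero]
  -- ρ on powers of g
  have hρgm : ∀ m : ℕ, ρ (g ^ m) = !![ξ ^ m, 0; 0, (-ξ) ^ m] := by
    intro m
    induction m with
    | zero => simp [Matrix.one_fin_two]
    | succ n ih =>
        rw [pow_succ, map_mul, ih, hρg, Matrix.mul_fin_two]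
        norm_num [pow_succ]
  -- comultiplication values
  have hcgm : ∀ m : ℕ, Coalgebra.comul (R := k) (g ^ m) = (g ^ m) ⊗ₜ[k] (g ^ m) := by
    intro m; rw [Bialgebra.comul_pow, hcg, Algebra.TensorProduct.tmul_pow]
  have hcgmx : ∀ m : ℕ, Coalgebra.comul (R := k) (g ^ m * x)
      = (g ^ m * x) ⊗ₜ[k] (g ^ m * g) + (g ^ m) ⊗ₜ[k] (g ^ m * x) := by
    intro m
    rw [Bialgebra.comul_mul, hcgm, hcx, mul_add, Algebra.TensorProduct.tmul_mul_tmul,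
      Algebra.TensorProduct.tmul_mul_tmul, mul_one]
  -- scalar helpers
  have hsq : ∀ m : ℕ, ξ ^ m * ξ ^ m = (-1 : k) ^ m := by
    intro m; rw [← mul_pow, ← pow_two, hξ2]
  have hmix : ∀ m : ℕ, (-ξ) ^ m * ξ ^ m = (1 : k) := by
    intro m; rw [← mul_pow, neg_mul, ← pow_two, hξ2, neg_neg, one_pow]
  -- values of y = e00 * e01
  have hy0 : ∀ m : ℕ, convProd k (e 0 0) (e 0 1) (g ^ m) = 0 := by
    intro m
    simp only [convProd, LinearMap.coe_comp, Function.comp_apply, hcgm,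
      TensorProduct.map_tmul, LinearMap.mul'_apply, he, hρgm]
    simp
  have hy1 : ∀ m : ℕ, convProd k (e 0 0) (e 0 1) (g ^ m * x) = 2 * (-1 : k) ^ m := by
    intro m
    simp only [convProd, LinearMap.coe_comp, Function.comp_apply, hcgmx, map_add,
      TensorProduct.map_tmul, LinearMap.mul'_apply, he, map_mul, hρgm, hρg, hρx]
    simp [Matrix.mul_apply, Fin.sum_univ_two]
    linear_combination (2 : k) * hsq m
  have hyA : ∀ m n : ℕ, convProd k (e 0 0) (e 0 1) (g ^ m * g ^ n) = 0 := by
    intro m n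
    rw [← pow_add]
    exact hy0 (m + n)
  have hyB : ∀ m n : ℕ, convProd k (e 0 0) (e 0 1) (g ^ m * (g ^ n * x))
      = 2 * (-1 : k) ^ (m + n) := by
    intro m n
    rw [← mul_assoc, ← pow_add]
    exact hy1 (m + n)
  have hyC : ∀ m n : ℕ, convProd k (e 0 0) (e 0 1) ((g ^ m * x) * g ^ n)
      = 2 * (-1 : k) ^ m := by
    intro m n
    simp only [convProd, LinearMap.coe_comp, Function.comp_apply, Bialgebra.comul_mul,
      hcgmx, hcgm, add_mul, Algebra.TensorProduct.tmul_mul_tmul, map_add,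
      TensorProduct.map_tmul, LinearMap.mul'_apply, he, map_mul, hρgm, hρg, hρx]
    simp [Matrix.mul_apply, Fin.sum_univ_two]
    linear_combination (2 * ξ ^ m * ξ ^ m) * hmix n + (2 : k) * hsq m
  have hyD : ∀ m n : ℕ, convProd k (e 0 0) (e 0 1) ((g ^ m * x) * (g ^ n * x)) = 0 := by
    intro m n
    simp only [convProd, LinearMap.coe_comp, Function.comp_apply, Bialgebra.comul_mul,
      hcgmx, add_mul, mul_add, Algebra.TensorProduct.tmul_mul_tmul, map_add,
      TensorProduct.map_tmul, LinearMap.mul'_apply, he, map_mul, hρgm, hρg, hρx]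
    simp [Matrix.mul_apply, Fin.sum_univ_two]
  -- values of z = e00 * e10
  have hz0 : ∀ m : ℕ, convProd k (e 0 0) (e 1 0) (g ^ m) = 0 := by
    intro m
    simp only [convProd, LinearMap.coe_comp, Function.comp_apply, hcgm,
      TensorProduct.map_tmul, LinearMap.mul'_apply, he, hρgm]
    simp
  have hz1 : ∀ m : ℕ, convProd k (e 0 0) (e 1 0) (g ^ m * x) = -1 := by
    intro m
    simp only [convProd, LinearMap.coe_comp, Function.comp_apply, hcgmx, map_add,
      TensorProduct.map_tmul, LinearMap.mul'_apply, he, map_mul, hρgm, hρg, hρx]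
    simp [Matrix.mul_apply, Fin.sum_univ_two]
    linear_combination hmix m
  have hzA : ∀ m n : ℕ, convProd k (e 0 0) (e 1 0) (g ^ m * g ^ n) = 0 := by
    intro m n
    rw [← pow_add]
    exact hz0 (m + n)
  have hzB : ∀ m n : ℕ, convProd k (e 0 0) (e 1 0) (g ^ m * (g ^ n * x)) = -1 := by
    intro m n
    rw [← mul_assoc, ← pow_add]
    exact hz1 (m + n)
  have hzC : ∀ m n : ℕ, convProd k (e 0 0) (e 1 0) ((g ^ m * x) * g ^ n)
      = -(-1 : k) ^ n := by
    intro m n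
    simp only [convProd, LinearMap.coe_comp, Function.comp_apply, Bialgebra.comul_mul,
      hcgmx, hcgm, add_mul, Algebra.TensorProduct.tmul_mul_tmul, map_add,
      TensorProduct.map_tmul, LinearMap.mul'_apply, he, map_mul, hρgm, hρg, hρx]
    simp [Matrix.mul_apply, Fin.sum_univ_two]
    linear_combination (ξ ^ n * ξ ^ n) * hmix m + hsq n
  have hzD : ∀ m n : ℕ, convProd k (e 0 0) (e 1 0) ((g ^ m * x) * (g ^ n * x)) = 0 := by
    intro m n
    simp only [convProd, LinearMap.coe_comp, Function.comp_apply, Bialgebra.comul_mul,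
      hcgmx, add_mul, mul_add, Algebra.TensorProduct.tmul_mul_tmul, map_add,
      TensorProduct.map_tmul, LinearMap.mul'_apply, he, map_mul, hρgm, hρg, hρx]
    simp [Matrix.mul_apply, Fin.sum_univ_two]
  -- single value specializations
  have hyg : convProd k (e 0 0) (e 0 1) g = 0 := by
    have h := hy0 1; rwa [pow_one] at h
  have hyx : convProd k (e 0 0) (e 0 1) x = 2 := by
    have h := hy1 0; rwa [pow_zero, one_mul, pow_zero, mul_one] at h
  have hzg : convProd k (e 0 0) (e 1 0) g = 0 := by
    have h := hz0 1; rwa [pow_one] at h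
  have hzx : convProd k (e 0 0) (e 1 0) x = -1 := by
    have h := hz1 0; rwa [pow_zero, one_mul] at h
  refine ⟨?_, ?_, ?_, ?_⟩
  · -- skew-primitivity of y
    have key : (LinearMap.mul k B).compr₂ (convProd k (e 0 0) (e 0 1))
        = LinearMap.smulRight (convProd k (e 0 0) (e 0 1)) (Coalgebra.counit)
          + LinearMap.smulRight α.toLinearMap (convProd k (e 0 0) (e 0 1)) := by
      refine b.ext fun p => b.ext fun q => ?_
      simp only [LinearMap.compr₂_apply, LinearMap.mul_apply', LinearMap.add_apply,
        LinearMap.smulRight_apply, LinearMap.smul_apply, smul_eq_mul, AlgHom.toLinearMap_apply]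
      rw [hb p, hb q]
      obtain ⟨i, j⟩ := p
      obtain ⟨i', j'⟩ := q
      fin_cases j <;> fin_cases j' <;>
        simp only [Fin.isValue, Fin.val_zero, Fin.val_one, pow_zero, pow_one, mul_one]
      · rw [hyA, hy0, hy0, hε0, hα0]; ring
      · rw [hyB, hy0, hεgx, hα0, hy1, pow_add]; ring
      · rw [hyC, hy1, hε0, hαgx, hy0]; ring
      · rw [hyD, hy1, hεgx, hαgx, hy1]; ring
    intro a c
    have h := LinearMap.congr_fun (LinearMap.congr_fun key a) c
    simpa only [LinearMap.compr₂_apply, LinearMap.mul_apply', LinearMap.add_apply,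
      LinearMap.smulRight_apply, LinearMap.smul_apply, smul_eq_mul,
      AlgHom.toLinearMap_apply] using h
  · -- non-triviality of y
    intro t h
    have h1 := LinearMap.congr_fun h g
    have h2 := LinearMap.congr_fun h x
    rw [hyg, LinearMap.smul_apply, LinearMap.sub_apply, AlgHom.toLinearMap_apply, hεg, hαg,
      smul_eq_mul] at h1
    rw [hyx, LinearMap.smul_apply, LinearMap.sub_apply, AlgHom.toLinearMap_apply, hεx, hαx,
      smul_eq_mul] at h2
    have ht : t = 0 := by linear_combination -h1 / 2
    rw [ht] at h2
    norm_num at h2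
  · -- skew-primitivity of z
    have key : (LinearMap.mul k B).compr₂ (convProd k (e 0 0) (e 1 0))
        = LinearMap.smulRight (convProd k (e 0 0) (e 1 0)) α.toLinearMap
          + LinearMap.smulRight (Coalgebra.counit) (convProd k (e 0 0) (e 1 0)) := by
      refine b.ext fun p => b.ext fun q => ?_
      simp only [LinearMap.compr₂_apply, LinearMap.mul_apply', LinearMap.add_apply,
        LinearMap.smulRight_apply, LinearMap.smul_apply, smul_eq_mul, AlgHom.toLinearMap_apply]
      rw [hb p, hb q]
      obtain ⟨i, j⟩ := p
      obtain ⟨i', j'⟩ := q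
      fin_cases j <;> fin_cases j' <;>
        simp only [Fin.isValue, Fin.val_zero, Fin.val_one, pow_zero, pow_one, mul_one]
      · rw [hzA, hz0, hz0, hα0, hε0]; ring
      · rw [hzB, hz0, hαgx, hε0, hz1]; ring
      · rw [hzC, hz1, hα0, hεgx, hz0]; ring
      · rw [hzD, hz1, hαgx, hεgx, hz1]; ring
    intro a c
    have h := LinearMap.congr_fun (LinearMap.congr_fun key a) c
    simpa only [LinearMap.compr₂_apply, LinearMap.mul_apply', LinearMap.add_apply,
      LinearMap.smulRight_apply, LinearMap.smul_apply, smul_eq_mul,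
      AlgHom.toLinearMap_apply] using h
  · -- non-triviality of z
    intro t h
    have h1 := LinearMap.congr_fun h g
    have h2 := LinearMap.congr_fun h x
    rw [hzg, LinearMap.smul_apply, LinearMap.sub_apply, AlgHom.toLinearMap_apply, hεg, hαg,
      smul_eq_mul] at h1
    rw [hzx, LinearMap.smul_apply, LinearMap.sub_apply, AlgHom.toLinearMap_apply, hεx, hαx,
      smul_eq_mul] at h2
    have ht : t = 0 := by linear_combination h1 / 2
    rw [ht] at h2
    norm_num at h2
end

section
/- Let H be a finite-dimensional Hopf algebra generated as an algebra by two simple subcoalgebras C and D with S(C) = D. Then H is generated as an algebra by C and 1. -/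
open TensorProduct Coalgebra HopfAlgebra

section Conv
variable {k : Type*} [CommSemiring k] {H : Type*} [Semiring H] [Algebra k H] [Coalgebra k H]

/-- Convolution product on `H →ₗ[k] H`. -/
noncomputable def conv (f g : H →ₗ[k] H) : H →ₗ[k] H :=
  LinearMap.mul' k H ∘ₗ TensorProduct.map f g ∘ₗ Coalgebra.comul

lemma conv_apply_repr (f g : H →ₗ[k] H) {x : H} {ι : Type*} (r : Coalgebra.Repr k x ι) :
    conv f g x = ∑ i ∈ r.index, f (r.left i) * g (r.right i) := by
  simp [conv, ← r.eq, map_sum]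

/-- The convolution unit. -/
noncomputable def convOne : H →ₗ[k] H := Algebra.linearMap k H ∘ₗ Coalgebra.counit

lemma convOne_apply (x : H) : convOne (k := k) x = algebraMap k H (Coalgebra.counit x) := rfl

lemma one_conv (f : H →ₗ[k] H) : conv convOne f = f := by
  ext x
  rw [conv_apply_repr (r := ℛ k x)]
  have h := congrArg (TensorProduct.lid k H) (Coalgebra.sum_counit_tmul_map_eq f x (repr := ℛ k x))
  simp only [map_sum, TensorProduct.lid_tmul, one_smul] at h
  simp only [convOne_apply, ← Algebra.smul_def, h, LinearMap.id_apply]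

lemma conv_one (f : H →ₗ[k] H) : conv f convOne = f := by
  ext x
  rw [conv_apply_repr (r := ℛ k x)]
  have h := congrArg (TensorProduct.rid k H) (Coalgebra.sum_map_tmul_counit_eq f x (repr := ℛ k x))
  simp only [map_sum, TensorProduct.rid_tmul, one_smul] at h
  calc ∑ i ∈ (ℛ k x).index, f ((ℛ k x).left i) * algebraMap k H (Coalgebra.counit ((ℛ k x).right i))
      = ∑ i ∈ (ℛ k x).index, Coalgebra.counit (R := k) ((ℛ k x).right i) • f ((ℛ k x).left i) := by
        refine Finset.sum_congr rfl fun i _ => ?_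
        rw [Algebra.smul_def, ← Algebra.commutes]
    _ = f x := h

lemma conv_assoc (f g h : H →ₗ[k] H) : conv (conv f g) h = conv f (conv g h) := by
  ext x
  set r := ℛ k x with hr
  set a₁ : ∀ i, Coalgebra.Repr k (r.left i) (H × H) := fun i => ℛ k (r.left i) with ha₁
  set a₂ : ∀ i, Coalgebra.Repr k (r.right i) (H × H) := fun i => ℛ k (r.right i) with ha₂
  have key := congrArg (LinearMap.mul' k H ∘ₗ LinearMap.lTensor H (LinearMap.mul' k H))
    (Coalgebra.sum_map_tmul_tmul_eq f g h x (repr := r) (a₁ := a₁) (a₂ := a₂))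
  simp only [map_sum, LinearMap.comp_apply, LinearMap.lTensor_tmul, TensorProduct.map_tmul,
    LinearMap.mul'_apply] at key
  calc conv (conv f g) h x
      = ∑ i ∈ r.index, conv f g (r.left i) * h (r.right i) := conv_apply_repr _ _ r
    _ = ∑ i ∈ r.index, ∑ j ∈ (a₁ i).index,
          f ((a₁ i).left j) * (g ((a₁ i).right j) * h (r.right i)) := by
        refine Finset.sum_congr rfl fun i _ => ?_
        rw [conv_apply_repr f g (a₁ i), Finset.sum_mul]
        exact Finset.sum_congr rfl fun j _ => (mul_assoc _ _ _)
    _ = ∑ i ∈ r.index, ∑ j ∈ (a₂ i).index,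
          f (r.left i) * (g ((a₂ i).left j) * h ((a₂ i).right j)) := key.symm
    _ = ∑ i ∈ r.index, f (r.left i) * conv g h (r.right i) := by
        refine Finset.sum_congr rfl fun i _ => ?_
        rw [conv_apply_repr g h (a₂ i), Finset.mul_sum]
    _ = conv f (conv g h) x := (conv_apply_repr _ _ r).symm


end Conv

section Hopf
variable {k : Type*} [CommSemiring k] {H : Type*} [Semiring H] [HopfAlgebra k H]

lemma antipode_conv_id : conv (antipode (R := k) (A := H)) LinearMap.id = convOne := by
  ext x
  rw [conv_apply_repr (r := ℛ k x)]
  simp only [LinearMap.id_apply]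
  rw [HopfAlgebra.sum_antipode_mul_eq_algebraMap_counit (ℛ k x)]
  rfl

lemma id_conv_antipode : conv LinearMap.id (antipode (R := k) (A := H)) = convOne := by
  ext x
  rw [conv_apply_repr (r := ℛ k x)]
  simp only [LinearMap.id_apply]
  rw [HopfAlgebra.sum_mul_antipode_eq_algebraMap_counit (ℛ k x)]
  rfl

end Hopf

theorem antipode_mem_of_subcoalgebra {k : Type*} [Field k] {H : Type*} [Ring H]
    [HopfAlgebra k H] [FiniteDimensional k H] (B : Subalgebra k H)
    (hB : ∀ x ∈ B, Coalgebra.comul (R := k) x ∈ LinearMap.range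
      (TensorProduct.map (Subalgebra.toSubmodule B).subtype (Subalgebra.toSubmodule B).subtype))
    {x : H} (hx : x ∈ B) : HopfAlgebra.antipode (R := k) x ∈ B := by
  classical
  set W : Submodule k (H →ₗ[k] H) :=
    { carrier := {f : H →ₗ[k] H | ∀ y ∈ B, f y ∈ B}
      add_mem' := fun hf hg y hy => by simpa using add_mem (hf y hy) (hg y hy)
      zero_mem' := fun y hy => by simpa using B.zero_mem
      smul_mem' := fun c f hf y hy => by simpa using B.smul_mem (hf y hy) c } with hW
  set T : (H →ₗ[k] H) →ₗ[k] (H →ₗ[k] H) :=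
    { toFun := fun f => conv LinearMap.id f
      map_add' := fun f g => by
        simp [conv, TensorProduct.map_add_right, LinearMap.add_comp, LinearMap.comp_add]
      map_smul' := fun c f => by
        simp [conv, TensorProduct.map_smul_right, LinearMap.smul_comp, LinearMap.comp_smul] } with hT
  have hTW : ∀ f ∈ W, T f ∈ W := by
    intro f hf y hy
    obtain ⟨t, ht⟩ := hB y hy
    have : T f y = LinearMap.mul' k H (TensorProduct.map LinearMap.id f
        (TensorProduct.map (Subalgebra.toSubmodule B).subtype (Subalgebra.toSubmodule B).subtype t)) := by
      simp [hT, conv, ht]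
    rw [this]
    clear this ht
    induction t using TensorProduct.induction_on with
    | zero => simpa using B.zero_mem
    | tmul a b => simpa using B.mul_mem a.2 (hf _ b.2)
    | add a b iha ihb => simpa [map_add] using B.add_mem iha ihb
  have Tinj : Function.Injective T := by
    intro f g hfg
    have h1 : conv (antipode (R := k)) (conv LinearMap.id f)
        = conv (antipode (R := k)) (conv LinearMap.id g) := by
      simp only [hT, LinearMap.coe_mk, AddHom.coe_mk] at hfg; exact congrArg (conv (antipode (R := k))) hfg
    rwa [← conv_assoc, ← conv_assoc, antipode_conv_id, one_conv, one_conv] at h1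
  set T' : W →ₗ[k] W := T.restrict hTW with hT'
  have T'inj : Function.Injective T' := by
    intro a b h
    exact Subtype.ext (Tinj (congrArg Subtype.val h))
  have T'surj : Function.Surjective T' := by
    have := @LinearMap.injective_iff_surjective k W _ _ _ _ T'
    exact this.mp T'inj
  have he : convOne (k := k) (H := H) ∈ W := by
    intro y hy
    exact B.algebraMap_mem _
  obtain ⟨⟨g, hgW⟩, hg⟩ := T'surj ⟨convOne, he⟩
  have hg' : conv LinearMap.id g = convOne := by
    have := congrArg Subtype.val hg
    exact this
  have hS : antipode (R := k) (A := H) = g := by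
    calc antipode (R := k) (A := H) = conv (antipode (R := k)) convOne := (conv_one _).symm
      _ = conv (antipode (R := k)) (conv LinearMap.id g) := by rw [hg']
      _ = conv (conv (antipode (R := k)) LinearMap.id) g := (conv_assoc _ _ _).symm
      _ = conv convOne g := by rw [antipode_conv_id]
      _ = g := one_conv g
  rw [hS]
  exact hgW x hx

/-- A submodule `C` of a coalgebra is a subcoalgebra if `Δ(C) ⊆ C ⊗ C`. -/
def IsSubcoalgebra (k : Type*) [CommRing k] {H : Type*} [AddCommGroup H] [Module k H]
    [Coalgebra k H] (C : Submodule k H) : Prop :=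
  ∀ c ∈ C, Coalgebra.comul (R := k) c ∈ LinearMap.range (TensorProduct.map C.subtype C.subtype)

/-- A subcoalgebra is simple if it is nonzero and has no proper nonzero subcoalgebras. -/
def IsSimpleSubcoalgebra (k : Type*) [CommRing k] {H : Type*} [AddCommGroup H] [Module k H]
    [Coalgebra k H] (C : Submodule k H) : Prop :=
  IsSubcoalgebra k C ∧ C ≠ ⊥ ∧
    ∀ C' : Submodule k H, C' ≤ C → IsSubcoalgebra k C' → C' = ⊥ ∨ C' = C

/-- If a finite-dimensional Hopf algebra `H` is generated as an algebra by two
simple subcoalgebras `C` and `D` with `S(C) = D`, then `H` is generated as an algebra by `C`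
and `1`. -/
theorem generated_by_one_simple_subcoalgebra
    (k : Type*) [Field k]
    (H : Type*) [Ring H] [HopfAlgebra k H] [FiniteDimensional k H]
    (C D : Submodule k H)
    (hC : IsSimpleSubcoalgebra k C) (hD : IsSimpleSubcoalgebra k D)
    (hSCD : C.map (HopfAlgebra.antipode (R := k)) = D)
    (hgen : Algebra.adjoin k ((C : Set H) ∪ (D : Set H)) = ⊤) :
    Algebra.adjoin k (C : Set H) = ⊤ := by
  classical
  set B := Algebra.adjoin k (C : Set H) with hB
  have hle : C ≤ Subalgebra.toSubmodule B := fun c hc => Algebra.subset_adjoin hc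
  have hvalL : (Algebra.TensorProduct.map B.val B.val).toLinearMap
      = TensorProduct.map (Subalgebra.toSubmodule B).subtype (Subalgebra.toSubmodule B).subtype := rfl
  have hsub : ∀ x ∈ B, Coalgebra.comul (R := k) x ∈ LinearMap.range
      (TensorProduct.map (Subalgebra.toSubmodule B).subtype (Subalgebra.toSubmodule B).subtype) := by
    have hadj : B ≤ Subalgebra.comap (Bialgebra.comulAlgHom k H)
        (Algebra.TensorProduct.map B.val B.val).range := by
      rw [hB]
      apply Algebra.adjoin_le
      intro c hc
      obtain ⟨t, ht⟩ := hC.1 c hc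
      rw [SetLike.mem_coe, Subalgebra.mem_comap]
      refine ⟨TensorProduct.map (Submodule.inclusion hle) (Submodule.inclusion hle) t, ?_⟩
      have hcomp : TensorProduct.map (Subalgebra.toSubmodule B).subtype
            (Subalgebra.toSubmodule B).subtype ∘ₗ
            TensorProduct.map (Submodule.inclusion hle) (Submodule.inclusion hle)
          = TensorProduct.map C.subtype C.subtype := by
        rw [← TensorProduct.map_comp,
          Submodule.subtype_comp_inclusion]
      calc Algebra.TensorProduct.map B.val B.val
            (TensorProduct.map (Submodule.inclusion hle) (Submodule.inclusion hle) t)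
          = (TensorProduct.map (Subalgebra.toSubmodule B).subtype
              (Subalgebra.toSubmodule B).subtype ∘ₗ
              TensorProduct.map (Submodule.inclusion hle) (Submodule.inclusion hle)) t := rfl
        _ = TensorProduct.map C.subtype C.subtype t := by rw [hcomp]
        _ = Bialgebra.comulAlgHom k H c := ht
    intro x hx
    obtain ⟨t, ht⟩ := (Subalgebra.mem_comap _ _ _).mp (hadj hx)
    exact ⟨t, by rw [← hvalL]; exact ht⟩
  have hDB : (D : Set H) ⊆ (B : Set H) := by
    intro d hd
    rw [← hSCD] at hd
    obtain ⟨c, hc, rfl⟩ := hd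
    exact antipode_mem_of_subcoalgebra B hsub (Algebra.subset_adjoin hc)
  have htop : Algebra.adjoin k ((C : Set H) ∪ (D : Set H)) ≤ B :=
    Algebra.adjoin_le (Set.union_subset (Algebra.subset_adjoin) hDB)
  rw [hgen] at htop
  exact top_le_iff.mp htop
end
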